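/- arXiv:1702.02668 — 7 statements merged into one kernel-verified Lean document; each statement's English description precedes it below -/
import Mathlib

section
/- An ultrafilter U on ω is selective (for every f : ω → ω there is X ∈ U on which f is constant or injective) if and only if U is Ramsey for pairs: for every coloring c : [ω]² → 2 there is X ∈ U with c constant on [X]². -/
/-- An ultrafilter on ω is selective iff it is Ramsey for pairs. -/
theorem stmt_0 (U : Ultrafilter ℕ) (hU : ∀ a : ℕ, U ≠ pure a) :
    (∀ f : ℕ → ℕ, ∃ X ∈ U, (∀ x ∈ X, ∀ y ∈ X, f x = f y) ∨ Set.InjOn f X) ↔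
    (∀ c : Finset ℕ → Fin 2, ∃ X ∈ U, ∀ s t : Finset ℕ,
      s.card = 2 → ↑s ⊆ X → t.card = 2 → ↑t ⊆ X → c s = c t) := by
  classical
  have fin2 : ∀ v : Fin 2, v ≠ 0 → v = 1 := by decide
  have hne : ∀ n : ℕ, {m : ℕ | m ≠ n} ∈ U := by
    intro n
    have : ({n} : Set ℕ) ∉ U := by
      intro h
      obtain ⟨x, hx, hfx⟩ := Ultrafilter.eq_pure_of_finite_mem (Set.finite_singleton n) h
      exact hU x hfx
    have h2 := Ultrafilter.compl_mem_iff_notMem.2 this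
    have h3 : {m : ℕ | m ≠ n} = ({n} : Set ℕ)ᶜ := by ext m; simp
    rw [h3]; exact h2
  constructor
  · -- selective → Ramsey
    intro hsel c
    set eps : ℕ → Fin 2 := fun n => if {m : ℕ | m ≠ n ∧ c {n, m} = 0} ∈ U then 0 else 1
      with heps
    set B : ℕ → Set ℕ := fun n => {m : ℕ | m ≠ n ∧ c {n, m} = eps n} with hBdef
    have hB : ∀ n, B n ∈ U := by
      intro n
      by_cases h : {m : ℕ | m ≠ n ∧ c {n, m} = 0} ∈ U
      · have he : eps n = 0 := by simp [heps, h]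
        simpa [hBdef, he] using h
      · have he : eps n = 1 := by simp [heps, h]
        have h' := Ultrafilter.compl_mem_iff_notMem.2 h
        have := Filter.inter_mem (hne n) h'
        refine U.toFilter.mem_of_superset this ?_
        intro m hm
        rcases hm with ⟨hm1, hm2⟩
        simp only [Set.mem_compl_iff, Set.mem_setOf_eq] at hm2
        push_neg at hm2
        refine ⟨hm1, ?_⟩
        rw [he]
        exact fin2 _ (hm2 hm1)
    -- constant color on a large set
    obtain ⟨i, A, hA, hAe⟩ : ∃ i : Fin 2, ∃ A ∈ U, ∀ n ∈ A, eps n = i := by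
      by_cases h : {n : ℕ | eps n = 0} ∈ U
      · exact ⟨0, _, h, fun n hn => hn⟩
      · refine ⟨1, _, Ultrafilter.compl_mem_iff_notMem.2 h, fun n hn => ?_⟩
        exact fin2 _ hn
    set D : ℕ → Set ℕ := fun n => (A ∩ {m | n < m}) ∩ ⋂ k ∈ A ∩ Set.Iic n, B k with hDdef
    have hD : ∀ n, D n ∈ U := by
      intro n
      refine Filter.inter_mem (Filter.inter_mem hA ?_) ?_
      · -- cofinite set {m | n < m}
        have : ({m : ℕ | n < m} : Set ℕ)ᶜ.Finite := by
          have : ({m : ℕ | n < m} : Set ℕ)ᶜ = Set.Iic n := by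
            ext m; simp [Set.mem_compl_iff, Nat.not_lt]
          rw [this]; exact Set.finite_Iic n
        have hnot : ({m : ℕ | n < m} : Set ℕ)ᶜ ∉ U := by
          intro h
          obtain ⟨x, _, hfx⟩ := Ultrafilter.eq_pure_of_finite_mem this h
          exact hU x hfx
        have := Ultrafilter.compl_mem_iff_notMem.2 hnot
        simpa using this
      · rw [Filter.biInter_mem ((Set.finite_Iic n).subset Set.inter_subset_right)]
        exact fun k _ => hB k
    have hDn : ∀ n, n ∉ D n := fun n hn => lt_irrefl n hn.1.2
    have hex : ∀ n, ∃ k, n ∉ D k := fun n => ⟨n, hDn n⟩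
    set f : ℕ → ℕ := fun n => Nat.find (hex n) with hfdef
    have hmem : ∀ n k, k < f n → n ∈ D k := by
      intro n k hk
      have := Nat.find_min (hex n) hk
      simpa using this
    obtain ⟨Y, hY, hYc⟩ := hsel f
    have hYinj : Set.InjOn f Y := by
      rcases hYc with hconst | hinj
      · exfalso
        obtain ⟨y, hy⟩ := Filter.nonempty_of_mem hY
        obtain ⟨z, hz⟩ := Filter.nonempty_of_mem (Filter.inter_mem hY (hD (f y)))
        have h1 : f z = f y := hconst z hz.1 y hy
        have h2 : z ∉ D (f z) := Nat.find_spec (hex z)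
        rw [h1] at h2
        exact h2 hz.2
      · exact hinj
    have hstep : ∀ b : ℕ, ∃ b', b < b' ∧ ∀ n ∈ Y, f n < b → n < b' := by
      intro b
      have hfin : {n | n ∈ Y ∧ f n < b}.Finite := by
        apply Set.Finite.of_finite_image (f := f)
        · refine (Set.finite_Iio b).subset ?_
          rintro m ⟨n, hn, rfl⟩
          exact hn.2
        · exact hYinj.mono fun n hn => hn.1
      obtain ⟨m, hm⟩ := hfin.bddAbove
      refine ⟨max b m + 1, by omega, fun n hn hfn => ?_⟩
      have : n ≤ m := hm ⟨hn, hfn⟩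
      omega
    choose g hg1 hg2 using hstep
    set a : ℕ → ℕ := fun j => g^[j] 0 with hadef
    have hasucc : ∀ j, a (j + 1) = g (a j) := fun j => Function.iterate_succ_apply' g j 0
    have hamono : StrictMono a := by
      apply strictMono_nat_of_lt_succ
      intro j
      rw [hasucc]
      exact hg1 _
    have hkey : ∀ j, ∀ n ∈ Y, a (j + 1) ≤ n → a j ≤ f n := by
      intro j n hn h
      by_contra hlt
      push_neg at hlt
      have := hg2 (a j) n hn hlt
      rw [hasucc] at h
      omega
    set jd : ℕ → ℕ := fun n => Nat.findGreatest (fun j => a j ≤ n) n with hjdef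
    have ha0 : a 0 = 0 := rfl
    have hjd1 : ∀ n, a (jd n) ≤ n := by
      intro n
      exact Nat.findGreatest_spec (P := fun j => a j ≤ n) (n := n) (m := 0)
        (Nat.zero_le n) (Nat.zero_le n)
    have hjd2 : ∀ n, n < a (jd n + 1) := by
      intro n
      by_contra h
      push_neg at h
      have hle : jd n + 1 ≤ n := le_trans (hamono.le_apply) h
      exact Nat.findGreatest_is_greatest (Nat.lt_succ_self _) hle h
    obtain ⟨Z1, hZ1, hZ1c⟩ := hsel jd
    have hZ1inj : Set.InjOn jd Z1 := by
      rcases hZ1c with hconst | hinj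
      · exfalso
        obtain ⟨z0, hz0⟩ := Filter.nonempty_of_mem hZ1
        have hfin : Z1.Finite := by
          refine (Set.finite_Iio (a (jd z0 + 1))).subset ?_
          intro n hn
          have h1 : jd n = jd z0 := hconst n hn z0 hz0
          have h2 := hjd2 n
          rw [h1] at h2
          exact h2
        obtain ⟨p, _, hpure⟩ := Ultrafilter.eq_pure_of_finite_mem hfin hZ1
        exact hU p hpure
      · exact hinj
    obtain ⟨Par, hPar, hParp⟩ :
        ∃ P ∈ U, ∀ x ∈ P, ∀ y ∈ P, (Even (jd x) ↔ Even (jd y)) := by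
      by_cases h : {n : ℕ | Even (jd n)} ∈ U
      · exact ⟨_, h, fun x hx y hy => iff_of_true hx hy⟩
      · exact ⟨_, Ultrafilter.compl_mem_iff_notMem.2 h,
          fun x hx y hy => iff_of_false hx hy⟩
    set Z : Set ℕ := ((Y ∩ Z1) ∩ Par) ∩ D 0 with hZdef
    have hZ : Z ∈ U :=
      Filter.inter_mem (Filter.inter_mem (Filter.inter_mem hY hZ1) hPar) (hD 0)
    have main : ∀ x ∈ Z, ∀ y ∈ Z, x < y → c {x, y} = i := by
      intro x hx y hy hxy
      obtain ⟨⟨⟨hxY, hxZ1⟩, hxP⟩, hxD0⟩ := hx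
      obtain ⟨⟨⟨hyY, hyZ1⟩, hyP⟩, hyD0⟩ := hy
      have hxA : x ∈ A := hxD0.1.1
      have hjne : jd x ≠ jd y := fun h => (ne_of_lt hxy) (hZ1inj hxZ1 hyZ1 h)
      have hjlt : jd x < jd y := by
        rcases lt_or_ge (jd x) (jd y) with h | h
        · exact h
        · exfalso
          have h1 : jd y < jd x := lt_of_le_of_ne h hjne.symm
          have h2 : a (jd y + 1) ≤ a (jd x) := hamono.monotone h1
          have h3 := hjd1 x
          have h4 := hjd2 y
          omega
      have hpar := hParp x hxP y hyP
      have hj2 : jd x + 2 ≤ jd y := by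
        rcases Nat.lt_or_ge (jd y) (jd x + 2) with h | h
        · exfalso
          have h1 : jd y = jd x + 1 := by omega
          rw [h1, Nat.even_add_one] at hpar
          tauto
        · exact h
      have hyge : a (jd x + 2) ≤ y := le_trans (hamono.monotone hj2) (hjd1 y)
      have hfy : a (jd x + 1) ≤ f y := hkey (jd x + 1) y hyY hyge
      have hxlt : x < f y := lt_of_lt_of_le (hjd2 x) hfy
      have hyD : y ∈ D x := hmem y x hxlt
      have hyB : y ∈ B x := by
        have h2 := hyD.2
        rw [Set.mem_iInter₂] at h2
        exact h2 x ⟨hxA, le_refl x⟩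
      have : c {x, y} = eps x := hyB.2
      rw [this, hAe x hxA]
    refine ⟨Z, hZ, ?_⟩
    have hpair : ∀ s : Finset ℕ, s.card = 2 → ↑s ⊆ Z → c s = i := by
      intro s hs hsub
      obtain ⟨u, v, huv, rfl⟩ := Finset.card_eq_two.1 hs
      have hu : u ∈ Z := hsub (by simp)
      have hv : v ∈ Z := hsub (by simp)
      rcases lt_or_gt_of_ne huv with h | h
      · exact main u hu v hv h
      · rw [Finset.pair_comm]
        exact main v hv u hu h
    intro s t hs hsub ht htsub
    rw [hpair s hs hsub, hpair t ht htsub]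
  · -- Ramsey → selective
    intro hram f
    set c : Finset ℕ → Fin 2 := fun s =>
      if ∃ x ∈ s, ∃ y ∈ s, x ≠ y ∧ f x = f y then 0 else 1 with hcdef
    obtain ⟨X, hX, hXc⟩ := hram c
    have hXinf : X.Infinite := by
      intro hfin
      obtain ⟨p, _, hpure⟩ := Ultrafilter.eq_pure_of_finite_mem hfin hX
      exact hU p hpure
    obtain ⟨x₀, hx₀, x₁, hx₁, hne01⟩ :
        ∃ x₀ ∈ X, ∃ x₁ ∈ X, x₀ ≠ x₁ := by
      obtain ⟨x₀, hx₀⟩ := hXinf.nonempty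
      obtain ⟨x₁, hx₁, hne⟩ := (hXinf.diff (Set.finite_singleton x₀)).nonempty
      exact ⟨x₀, hx₀, x₁, hx₁, fun h => hne (h ▸ rfl)⟩
    have hpairc : ∀ x ∈ X, ∀ y ∈ X, x ≠ y → c {x, y} = c {x₀, x₁} := by
      intro x hx y hy hxy
      apply hXc
      · exact Finset.card_pair hxy
      · intro z hz
        simp only [Finset.coe_insert, Finset.coe_singleton, Set.mem_insert_iff,
          Set.mem_singleton_iff] at hz
        rcases hz with rfl | rfl
        · exact hx
        · exact hy
      · exact Finset.card_pair hne01
      · intro z hz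
        simp only [Finset.coe_insert, Finset.coe_singleton, Set.mem_insert_iff,
          Set.mem_singleton_iff] at hz
        rcases hz with rfl | rfl
        · exact hx₀
        · exact hx₁
    refine ⟨X, hX, ?_⟩
    by_cases h0 : c {x₀, x₁} = 0
    · left
      intro x hx y hy
      by_cases hxy : x = y
      · rw [hxy]
      · have hc := hpairc x hx y hy hxy
        rw [h0] at hc
        rw [hcdef] at hc
        simp only at hc
        by_contra hfne
        rw [if_neg] at hc
        · exact absurd hc (by decide)
        · rintro ⟨u, hu, v, hv, huv, hfuv⟩
          simp only [Finset.mem_insert, Finset.mem_singleton] at hu hv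
          rcases hu with rfl | rfl <;> rcases hv with rfl | rfl
          · exact huv rfl
          · exact hfne hfuv
          · exact hfne hfuv.symm
          · exact huv rfl
    · right
      intro x hx y hy hfxy
      by_contra hxy
      have hc := hpairc x hx y hy hxy
      have hc1 : c {x, y} = 0 := by
        rw [hcdef]
        simp only
        rw [if_pos]
        exact ⟨x, by simp, y, by simp, hxy, hfxy⟩
      rw [hc1] at hc
      exact h0 hc.symm
end

section
/- Two ultrafilters are Rudin-Keisler equivalent if and only if they are isomorphic: if U is an ultrafilter on A and V an ultrafilter on B (A, B countably infinite), and there exist f : A → B and g : B → A with f(U) = V and g(V) = U, then there is a bijection h : A → B with h(U) = V. -/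
open Set

section Aux

variable (m : ℕ → ℕ)

/-- rank for the descending case -/
private def rkAux : ℕ → ℕ
  | n => if h : m n < n then rkAux (m n) + 1 else 0
  decreasing_by exact h

private lemma rkAux_eq (n : ℕ) (h : m n < n) : rkAux m n = rkAux m (m n) + 1 := by
  rw [rkAux]; simp [h]

/-- bound function -/
private def bnd (s : ℕ) : ℕ := (Finset.range (s + 1)).sup m + s + 1

private lemma lt_bnd {n s : ℕ} (h : n ≤ s) : m n < bnd m s := by
  have : m n ≤ (Finset.range (s + 1)).sup m :=
    Finset.le_sup (Finset.mem_range.2 (Nat.lt_succ_of_le h))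
  unfold bnd; omega

private lemma self_lt_bnd (s : ℕ) : s < bnd m s := by unfold bnd; omega

private def aseq : ℕ → ℕ
  | 0 => 0
  | j + 1 => bnd m (aseq j)

private lemma aseq_strictMono : StrictMono (aseq m) :=
  strictMono_nat_of_lt_succ fun j => self_lt_bnd m (aseq m j)

private lemma self_le_aseq (j : ℕ) : j ≤ aseq m j := by
  induction j with
  | zero => simp
  | succ j ih => have := self_lt_bnd m (aseq m j); simpa [aseq] using by omega

private def idx (n : ℕ) : ℕ := Nat.findGreatest (fun j => aseq m j ≤ n) n

private lemma aseq_idx_le (n : ℕ) : aseq m (idx m n) ≤ n :=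
  Nat.findGreatest_spec (P := fun j => aseq m j ≤ n) (Nat.zero_le n) (by simp [aseq])

private lemma lt_aseq_idx_succ (n : ℕ) : n < aseq m (idx m n + 1) := by
  by_contra hc
  push_neg at hc
  have h1 : idx m n + 1 ≤ n := le_trans (self_le_aseq m _) hc
  exact Nat.findGreatest_is_greatest (Nat.lt_succ_self _) h1 hc

private lemma idx_unique {n j : ℕ} (h1 : aseq m j ≤ n) (h2 : n < aseq m (j + 1)) :
    idx m n = j := by
  have hle : j ≤ idx m n :=
    Nat.le_findGreatest (le_trans (self_le_aseq m j) h1) h1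
  have : aseq m (idx m n) ≤ n := aseq_idx_le m n
  by_contra hne
  have hj : j + 1 ≤ idx m n := by omega
  have hmono := (aseq_strictMono m).monotone hj
  omega

private lemma m_lt_aseq_idx_two (n : ℕ) : m n < aseq m (idx m n + 2) := by
  have h1 : n < aseq m (idx m n + 1) := lt_aseq_idx_succ m n
  have : m n < bnd m (aseq m (idx m n + 1)) := lt_bnd m (by omega)
  simpa [aseq] using this

/-- for increasing n, idx (m n) is idx n or idx n + 1 -/
private lemma idx_m_cases {n : ℕ} (h : n < m n) :
    idx m (m n) = idx m n ∨ idx m (m n) = idx m n + 1 := by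
  have hlow : idx m n ≤ idx m (m n) := by
    have h1 : aseq m (idx m n) ≤ m n := le_trans (aseq_idx_le m n) (le_of_lt h)
    exact Nat.le_findGreatest (le_trans (le_trans (self_le_aseq m _) (aseq_idx_le m n)) h.le) h1
  have hhigh : idx m (m n) < idx m n + 2 := by
    have h1 : aseq m (idx m (m n)) ≤ m n := aseq_idx_le m (m n)
    have h2 : m n < aseq m (idx m n + 2) := m_lt_aseq_idx_two m n
    by_contra hc
    push_neg at hc
    have := (aseq_strictMono m).monotone hc
    omega
  omega

/-- rank for the increasing case within an interval -/
private def tk (n : ℕ) : ℕ :=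
  if h : n < m n ∧ m n < aseq m (idx m n + 1) then tk (m n) + 1 else 0
termination_by aseq m (idx m n + 1) - n
decreasing_by
  have hidx : idx m (m n) = idx m n :=
    idx_unique m (le_trans (aseq_idx_le m n) h.1.le) h.2
  rw [hidx]
  have := lt_aseq_idx_succ m n
  omega

private lemma tk_eq {n : ℕ} (h1 : n < m n) (h2 : m n < aseq m (idx m n + 1)) :
    tk m n = tk m (m n) + 1 := by
  rw [tk]; simp [h1, h2]

end Aux

/-- If a finite coloring separates x from m x on a U-large set, contradiction. -/
private lemma no_color {α : Type} {κ : Type} [Finite κ] (U : Ultrafilter α) (m : α → α)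
    (hm : U.map m = U) (c : α → κ) {S : Set α} (hS : S ∈ U)
    (h : ∀ x ∈ S, c (m x) ≠ c x) : False := by
  obtain ⟨i, -, hi⟩ := Ultrafilter.eq_pure_of_finite_mem (Set.finite_univ (α := κ))
    (Filter.univ_mem : (Set.univ : Set κ) ∈ (U.map c : Filter κ))
  have h1 : c ⁻¹' {i} ∈ U := by
    have : ({i} : Set κ) ∈ U.map c := by rw [hi]; exact rfl
    exact Ultrafilter.mem_map.1 this
  have h2 : m ⁻¹' (c ⁻¹' {i}) ∈ U := by
    have : c ⁻¹' {i} ∈ U.map m := hm.symm ▸ h1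
    exact Ultrafilter.mem_map.1 this
  obtain ⟨x, hx1, hx2, hx3⟩ := Ultrafilter.nonempty_of_mem (U.inter_mem hS (U.inter_mem h1 h2))
  exact h x hx1 (by simp only [Set.mem_preimage, Set.mem_singleton_iff] at hx2 hx3; rw [hx2, hx3])

/-- The fixed point lemma on ℕ. -/
private lemma fix_mem_nat (U : Ultrafilter ℕ) (m : ℕ → ℕ) (hm : U.map m = U) :
    {n | m n = n} ∈ U := by
  by_contra hc
  have hne : {n | m n ≠ n} ∈ U := (Ultrafilter.compl_mem_iff_notMem.2 hc)
  have hPQ : {n | n < m n} ∪ {n | m n < n} ∈ U := by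
    refine U.mem_of_superset hne fun n hn => ?_
    simp only [Set.mem_setOf_eq, Set.mem_union] at *
    omega
  rcases (Ultrafilter.union_mem_iff.1 hPQ) with hP | hQ
  · -- increasing case
    refine no_color U m hm (fun n => (decide (idx m n % 2 = 0), decide (tk m n % 2 = 0))) hP
      fun n hn => ?_
    simp only [Set.mem_setOf_eq] at hn
    intro hcc
    rw [Prod.ext_iff] at hcc
    simp only [decide_eq_decide] at hcc
    rcases idx_m_cases m hn with heq | hsucc
    · have hlt : m n < aseq m (idx m n + 1) := heq ▸ lt_aseq_idx_succ m (m n)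
      have ht : tk m n = tk m (m n) + 1 := tk_eq m hn hlt
      omega
    · omega
  · -- decreasing case
    refine no_color U m hm (fun n => decide (rkAux m n % 2 = 0)) hQ fun n hn => ?_
    simp only [Set.mem_setOf_eq] at hn
    have ht : rkAux m n = rkAux m (m n) + 1 := rkAux_eq m n hn
    intro hcc
    simp only [decide_eq_decide] at hcc
    omega

/-- Fixed point lemma: general countably infinite type. -/
private lemma fix_mem {A : Type} [Countable A] [Infinite A] (U : Ultrafilter A) (m : A → A)
    (hm : U.map m = U) : {a | m a = a} ∈ U := by
  obtain ⟨e⟩ : Nonempty (A ≃ ℕ) := nonempty_equiv_of_countable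
  set m' : ℕ → ℕ := e ∘ m ∘ e.symm with hm'
  have hmap : (U.map e).map m' = U.map e := by
    rw [Ultrafilter.map_map]
    have h1 : m' ∘ ⇑e = ⇑e ∘ m := by funext a; simp [hm']
    rw [h1, ← Ultrafilter.map_map, hm]
  have := fix_mem_nat (U.map e) m' hmap
  have h2 : e ⁻¹' {n | m' n = n} ∈ U := Ultrafilter.mem_map.1 this
  refine U.mem_of_superset h2 fun a ha => ?_
  simp only [Set.mem_preimage, Set.mem_setOf_eq, hm', Function.comp_apply,
    Equiv.symm_apply_apply] at ha
  exact e.injective ha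

/-- Shrink a U-set to one with infinite complement. -/
private lemma shrink {A : Type} [Infinite A] (U : Ultrafilter A) {S : Set A} (hS : S ∈ U) :
    ∃ S' ∈ U, S' ⊆ S ∧ (S'ᶜ : Set A).Infinite := by
  by_cases hc : (Sᶜ : Set A).Infinite
  · exact ⟨S, hS, le_rfl, hc⟩
  · have hSinf : S.Infinite := by
      rw [Set.not_infinite] at hc
      exact Set.infinite_of_finite_compl hc
    set ι := hSinf.natEmbedding
    set T : Set A := Set.range fun k => (ι (2 * k) : A) with hT
    have hTS : T ⊆ S := by rintro x ⟨k, rfl⟩; exact (ι (2 * k)).2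
    have hTinf : T.Infinite := Set.infinite_range_of_injective
      (fun a b hab => by
        have := ι.injective (Subtype.ext hab)
        omega)
    have hodd : Set.Infinite ((fun k => (ι (2 * k + 1) : A)) '' Set.univ) := by
      rw [Set.image_univ]
      exact Set.infinite_range_of_injective fun a b hab => by
        have := ι.injective (Subtype.ext hab); omega
    have hoddT : ((fun k => (ι (2 * k + 1) : A)) '' Set.univ) ⊆ S \ T := by
      rintro x ⟨k, -, rfl⟩
      refine ⟨(ι (2 * k + 1)).2, ?_⟩
      rintro ⟨j, hj⟩
      have := ι.injective (Subtype.ext hj)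
      omega
    rcases U.mem_or_compl_mem T with hTU | hTU
    · refine ⟨S ∩ T, U.inter_mem hS hTU, Set.inter_subset_left, ?_⟩
      refine Set.Infinite.mono ?_ hodd
      refine hoddT.trans fun x hx => ?_
      simp only [Set.mem_compl_iff, Set.mem_inter_iff, not_and]
      exact fun _ => hx.2
    · refine ⟨S ∩ Tᶜ, U.inter_mem hS hTU, Set.inter_subset_left, ?_⟩
      refine Set.Infinite.mono (fun x hx => ?_) hTinf
      simp only [Set.mem_compl_iff, Set.mem_inter_iff, not_and, not_not]
      exact fun _ => hx

/-- Two ultrafilters on countably infinite sets which are Rudin-Keisler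
reducible to each other are isomorphic via a bijection. -/
theorem stmt_8 {A B : Type} [Countable A] [Infinite A] [Countable B] [Infinite B]
    (U : Ultrafilter A) (V : Ultrafilter B) (f : A → B) (g : B → A)
    (hf : U.map f = V) (hg : V.map g = U) :
    ∃ h : A ≃ B, U.map h = V := by
  classical
  -- 1. g ∘ f is the identity on a U-large set
  have hgf : U.map (g ∘ f) = U := by
    rw [← Ultrafilter.map_map, hf, hg]
  have hS0 : {a | g (f a) = a} ∈ U := fix_mem U (g ∘ f) hgf
  -- 2. shrink to S₁ with infinite complement
  obtain ⟨S₁, hS₁U, hS₁sub, hS₁c⟩ := shrink U hS0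
  -- 3. f '' S₁ ∈ V, shrink to T with infinite complement
  have hfS₁ : f '' S₁ ∈ V := by
    rw [← hf, Ultrafilter.mem_map]
    exact U.mem_of_superset hS₁U (Set.subset_preimage_image f S₁)
  obtain ⟨T, hTV, hTsub, hTc⟩ := shrink V hfS₁
  -- 4. S₂ := S₁ ∩ f⁻¹ T
  set S₂ : Set A := S₁ ∩ f ⁻¹' T with hS₂def
  have hS₂U : S₂ ∈ U :=
    U.inter_mem hS₁U (Ultrafilter.mem_map.1 (show T ∈ U.map f by rw [hf]; exact hTV))
  have hinj : Set.InjOn f S₂ := by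
    intro a ha a' ha' hEq
    have h1 : g (f a) = a := hS₁sub ha.1
    have h2 : g (f a') = a' := hS₁sub ha'.1
    rw [← h1, ← h2, hEq]
  have hbij : Set.BijOn f S₂ T := by
    refine ⟨fun a ha => ha.2, hinj, fun b hb => ?_⟩
    obtain ⟨a, ha, rfl⟩ := hTsub hb
    exact ⟨a, ⟨ha, hb⟩, rfl⟩
  -- 5. complements are countably infinite, get a bijection between them
  have hS₂c : (S₂ᶜ : Set A).Infinite := Set.Infinite.mono (Set.compl_subset_compl.2
    Set.inter_subset_left) hS₁c
  have : Infinite (S₂ᶜ : Set A) := hS₂c.to_subtype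
  have : Infinite (Tᶜ : Set B) := hTc.to_subtype
  obtain ⟨φ⟩ : Nonempty ((S₂ᶜ : Set A) ≃ (Tᶜ : Set B)) := nonempty_equiv_of_countable
  set ψ : (S₂ : Set A) ≃ (T : Set B) := hbij.equiv f
  set h : A ≃ B :=
    ((Equiv.Set.sumCompl S₂).symm.trans ((ψ.sumCongr φ).trans (Equiv.Set.sumCompl T))) with hh
  refine ⟨h, ?_⟩
  have heq : Set.EqOn h f S₂ := by
    intro a ha
    simp only [hh, Equiv.trans_apply]
    rw [Equiv.Set.sumCompl_symm_apply_of_mem ha]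
    simp only [Equiv.sumCongr_apply, Sum.map_inl, Equiv.Set.sumCompl_apply_inl]
    rfl
  have : U.map h = U.map f := by
    apply Ultrafilter.coe_injective
    rw [Ultrafilter.coe_map, Ultrafilter.coe_map]
    exact Filter.map_congr (Filter.eventuallyEq_of_mem hS₂U heq)
  rw [this, hf]
end

section
/- Selective ultrafilters are Rudin-Keisler minimal among nonprincipal ultrafilters: if U is a selective ultrafilter on ω and V = f(U) for some f : ω → ω, then either V is principal or V is isomorphic to U via a bijection. -/
open Classical in
lemma aux_ext (f : ℕ → ℕ) (A : Set ℕ) (hinj : Set.InjOn f A)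
    (hAc : (Aᶜ : Set ℕ).Infinite) (hfAc : ((f '' A)ᶜ : Set ℕ).Infinite) :
    ∃ h : ℕ ≃ ℕ, ∀ x ∈ A, h x = f x := by
  let e1 : A ≃ (f '' A : Set ℕ) := Equiv.Set.imageOfInjOn f A hinj
  have : Infinite (Aᶜ : Set ℕ) := hAc.to_subtype
  have : Infinite ((f '' A)ᶜ : Set ℕ) := hfAc.to_subtype
  obtain ⟨e2⟩ : Nonempty ((Aᶜ : Set ℕ) ≃ ((f '' A)ᶜ : Set ℕ)) :=
    nonempty_equiv_of_countable
  refine ⟨(Equiv.Set.sumCompl A).symm.trans ((e1.sumCongr e2).trans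
    (Equiv.Set.sumCompl (f '' A))), fun x hx => ?_⟩
  simp only [Equiv.trans_apply, Equiv.Set.sumCompl_symm_apply_of_mem hx,
    Equiv.sumCongr_apply, Sum.map_inl, Equiv.Set.sumCompl_apply_inl]
  rfl

/-- Selective ultrafilters are Rudin-Keisler minimal among nonprincipal
ultrafilters. -/
theorem stmt_9 (U : Ultrafilter ℕ) (hU : ∀ a : ℕ, U ≠ pure a)
    (hsel : ∀ f : ℕ → ℕ, ∃ X ∈ U, (∀ x ∈ X, ∀ y ∈ X, f x = f y) ∨ Set.InjOn f X)
    (V : Ultrafilter ℕ) (f : ℕ → ℕ) (hV : V = U.map f) :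
    (∃ a : ℕ, V = pure a) ∨ (∃ h : ℕ ≃ ℕ, U.map h = V) := by
  obtain ⟨X, hXU, hconst | hinj⟩ := hsel f
  · -- constant case
    left
    obtain ⟨x0, hx0⟩ : X.Nonempty := Ultrafilter.nonempty_of_mem hXU
    refine ⟨f x0, ?_⟩
    have hmem : ({f x0} : Set ℕ) ∈ U.map f := U.toFilter.mem_of_superset hXU
      (fun y hy => by simp [hconst y hy x0 hx0])
    obtain ⟨a, ha, hpa⟩ := Ultrafilter.eq_pure_of_finite_mem (Set.finite_singleton _) hmem
    rw [hV, hpa]; simp at ha; simp [ha]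
  · -- injective case
    right
    have hXinf : X.Infinite := by
      intro hfin
      obtain ⟨a, _, ha⟩ := Ultrafilter.eq_pure_of_finite_mem hfin hXU
      exact hU a ha
    -- a key step: given suitable A, build the bijection
    have key : ∀ A : Set ℕ, A ∈ U → A ⊆ X → (Aᶜ : Set ℕ).Infinite →
        ∀ T : Set ℕ, T ⊆ X → Disjoint A T → T.Infinite →
        ∃ h : ℕ ≃ ℕ, U.map h = V := by
      intro A hAU hAX hAc T hTX hdisj hTinf
      have hfAc : ((f '' A)ᶜ : Set ℕ).Infinite := by
        refine Set.Infinite.mono ?_ (hTinf.image (hinj.mono hTX))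
        intro y ⟨t, ht, hty⟩
        rintro ⟨a, haA, hay⟩
        have : a = t := hinj (hAX haA) (hTX ht) (hay.trans hty.symm)
        exact hdisj.ne_of_mem haA ht this
      obtain ⟨h, hh⟩ := aux_ext f A (hinj.mono hAX) hAc hfAc
      refine ⟨h, ?_⟩
      rw [hV]
      apply Ultrafilter.coe_injective
      rw [Ultrafilter.coe_map, Ultrafilter.coe_map]
      exact Filter.map_congr (Filter.eventuallyEq_of_mem hAU hh)
    -- split X into two infinite pieces using an embedding ℕ ↪ X
    set g := hXinf.natEmbedding with hg
    set S : Set ℕ := Set.range (fun n => (g (2 * n) : ℕ)) with hS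
    set T : Set ℕ := Set.range (fun n => (g (2 * n + 1) : ℕ)) with hT
    have hSX : S ⊆ X := by rintro _ ⟨n, rfl⟩; exact (g (2 * n)).2
    have hTX : T ⊆ X := by rintro _ ⟨n, rfl⟩; exact (g (2 * n + 1)).2
    have hgc : Function.Injective (fun n : ℕ => (g n : ℕ)) :=
      Subtype.coe_injective.comp g.injective
    have hSinf : S.Infinite := Set.infinite_range_of_injective
      (fun a b hab => by have := hgc hab; omega)
    have hTinf : T.Infinite := Set.infinite_range_of_injective
      (fun a b hab => by have := hgc hab; omega)
    have hdisjST : Disjoint S T := by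
      rw [Set.disjoint_left]
      rintro _ ⟨n, rfl⟩ ⟨m, hm⟩
      have := hgc hm.symm
      omega
    by_cases hSU : S ∈ U
    · exact key S hSU hSX (hTinf.mono (fun t ht => (Set.disjoint_right.mp hdisjST ht)))
        T hTX hdisjST hTinf
    · have hA : X ∩ Sᶜ ∈ U := Filter.inter_mem hXU (Ultrafilter.compl_mem_iff_notMem.mpr hSU)
      refine key (X ∩ Sᶜ) hA Set.inter_subset_left
        (hSinf.mono (fun s hs hmem => hmem.2 hs)) S hSX ?_ hSinf
      exact Set.disjoint_left.mpr (fun x hx hxS => hx.2 hxS)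
end

section
/- The Erdős–Rado canonization theorem for pairs: for every equivalence relation E on [ω]², there exists an infinite M ⊆ ω and a set I ⊆ {0,1} such that for all a, b ∈ [M]², a E b if and only if π_I(a) = π_I(b), where π_I(a) = {a_i : i ∈ I} and a₀ < a₁ enumerates a in increasing order. -/
/-- Projection of an increasing pair to the coordinates in `I`. -/
def pairProj (I : Set (Fin 2)) (p : ℕ × ℕ) : Set ℕ :=
  {n | (0 ∈ I ∧ n = p.1) ∨ (1 ∈ I ∧ n = p.2)}

lemma sm4 {x y z w : ℕ} (h1 : x < y) (h2 : y < z) (h3 : z < w) :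
    StrictMono ![x, y, z, w] := by
  intro i j hij
  fin_cases i <;> fin_cases j <;> simp_all <;> omega

lemma pairProj_empty (p : ℕ × ℕ) : pairProj ∅ p = ∅ := by
  ext n; simp [pairProj]

lemma pairProj_zero (p : ℕ × ℕ) : pairProj {0} p = {p.1} := by
  ext n; simp [pairProj, (by decide : (1 : Fin 2) ≠ 0)]

lemma pairProj_one (p : ℕ × ℕ) : pairProj {1} p = {p.2} := by
  ext n; simp [pairProj, (by decide : (0 : Fin 2) ≠ 1)]

lemma pairProj_univ (p : ℕ × ℕ) : pairProj Set.univ p = {p.1, p.2} := by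
  ext n; simp [pairProj]

lemma pair_eq_iff {a b c d : ℕ} (h1 : a < b) (h2 : c < d) :
    ({a, b} : Set ℕ) = {c, d} ↔ a = c ∧ b = d := by
  constructor
  · intro h
    have ha : a = c ∨ a = d := by
      have : a ∈ ({c, d} : Set ℕ) := h ▸ (by simp : a ∈ ({a, b} : Set ℕ))
      simpa using this
    have hb : b = c ∨ b = d := by
      have : b ∈ ({c, d} : Set ℕ) := h ▸ (by simp : b ∈ ({a, b} : Set ℕ))
      simpa using this
    have hc : c = a ∨ c = b := by
      have : c ∈ ({a, b} : Set ℕ) := h.symm ▸ (by simp : c ∈ ({c, d} : Set ℕ))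
      simpa using this
    rcases ha with h'|h' <;> rcases hb with h''|h'' <;> rcases hc with h'''|h''' <;> omega
  · rintro ⟨rfl, rfl⟩; rfl


theorem ramseyAux : ∀ (k : ℕ) {C : Type} [Fintype C] [Nonempty C]
    (f : (Fin k → ℕ) → C),
    ∃ g : ℕ → ℕ, StrictMono g ∧ ∃ c : C,
      ∀ v : Fin k → ℕ, StrictMono v → f (fun i => g (v i)) = c := by
  intro k
  induction k with
  | zero =>
    intro C _ _ f
    exact ⟨id, strictMono_id, f (fun i => i.elim0), fun v hv => by
      congr 1; exact funext fun i => i.elim0⟩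
  | succ k ih =>
    intro C _ _ f
    have hstep : ∀ e : {e : ℕ → ℕ // StrictMono e},
        ∃ p : {e' : ℕ → ℕ // StrictMono e'} × C,
          (∀ i, ∃ j, p.1.1 i = e.1 (j + 1)) ∧
          ∀ v : Fin k → ℕ, StrictMono v →
            f (Fin.cons (e.1 0) (fun i => p.1.1 (v i))) = p.2 := by
      rintro ⟨e, he⟩
      obtain ⟨g, hg, c, hc⟩ :=
        ih (fun t : Fin k → ℕ => f (Fin.cons (e 0) (fun i => e (t i + 1))))
      refine ⟨⟨⟨fun i => e (g i + 1), ?_⟩, c⟩, fun i => ⟨g i, rfl⟩, fun v hv => ?_⟩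
      · intro i j hij
        exact he (by have := hg hij; omega)
      · exact hc v hv
    choose step hstep1 hstep2 using hstep
    let Esub : ℕ → {e : ℕ → ℕ // StrictMono e} :=
      fun n => Nat.rec ⟨id, strictMono_id⟩ (fun _ p => (step p).1) n
    let a : ℕ → ℕ := fun n => (Esub n).1 0
    let c : ℕ → C := fun n => (step (Esub n)).2
    have P1 : ∀ n i, ∃ j, (Esub (n+1)).1 i = (Esub n).1 (j+1) := fun n => hstep1 (Esub n)
    have P2 : ∀ n (v : Fin k → ℕ), StrictMono v →
        f (Fin.cons (a n) (fun i => (Esub (n+1)).1 (v i))) = c n :=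
      fun n v hv => hstep2 (Esub n) v hv
    have P3 : StrictMono a := by
      apply strictMono_nat_of_lt_succ
      intro n
      obtain ⟨j, hj⟩ := P1 n 0
      show (Esub n).1 0 < (Esub (n+1)).1 0
      rw [hj]
      exact (Esub n).2 (by omega)
    have P4 : ∀ n m, n ≤ m → ∀ i, ∃ j, (Esub m).1 i = (Esub n).1 j := by
      intro n m hnm
      induction m, hnm using Nat.le_induction with
      | base => exact fun i => ⟨i, rfl⟩
      | succ m hm ihm =>
        intro i
        obtain ⟨j', hj'⟩ := P1 m i
        obtain ⟨j, hj⟩ := ihm (j' + 1)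
        exact ⟨j, by rw [hj', hj]⟩
    have P5 : ∀ n m, n < m → ∃ j, a m = (Esub (n+1)).1 j := by
      intro n m hnm
      exact P4 (n+1) m hnm 0
    have hmain : ∀ w : Fin (k+1) → ℕ, StrictMono w → f (fun i => a (w i)) = c (w 0) := by
      intro w hw
      choose t ht using fun j : Fin k => P5 (w 0) (w j.succ) (hw (Fin.succ_pos j))
      have hts : StrictMono t := by
        intro j j' hjj
        have h1 : a (w j.succ) < a (w j'.succ) := P3 (hw (Fin.succ_lt_succ_iff.mpr hjj))
        rw [ht j, ht j'] at h1
        exact ((Esub (w 0 + 1)).2.lt_iff_lt).mp h1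
      have heq : (fun i => a (w i)) = Fin.cons (a (w 0)) (fun j => (Esub (w 0 + 1)).1 (t j)) := by
        funext i
        refine Fin.cases ?_ ?_ i
        · simp
        · intro j
          simp [ht j]
      rw [heq]
      exact P2 (w 0) t hts
    obtain ⟨cinf, hcinf⟩ := Finite.exists_infinite_fiber c
    have hinf : {n | c n = cinf}.Infinite := by
      rw [← Set.infinite_coe_iff]
      exact hcinf
    refine ⟨fun n => a (Nat.nth (fun n => c n = cinf) n),
      P3.comp (Nat.nth_strictMono hinf), cinf, fun v hv => ?_⟩
    have := hmain (fun i => Nat.nth (fun n => c n = cinf) (v i))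
      ((Nat.nth_strictMono hinf).comp hv)
    rw [this]
    exact Nat.nth_mem_of_infinite hinf (v 0)

/-- The Erdős–Rado canonization theorem for pairs. -/
theorem stmt_13 (E : ℕ × ℕ → ℕ × ℕ → Prop)
    (hrefl : ∀ p : ℕ × ℕ, p.1 < p.2 → E p p)
    (hsymm : ∀ p q : ℕ × ℕ, p.1 < p.2 → q.1 < q.2 → E p q → E q p)
    (htrans : ∀ p q r : ℕ × ℕ, p.1 < p.2 → q.1 < q.2 → r.1 < r.2 →
      E p q → E q r → E p r) :
    ∃ M : Set ℕ, M.Infinite ∧ ∃ I : Set (Fin 2),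
      ∀ p q : ℕ × ℕ, p.1 < p.2 → q.1 < q.2 →
        p.1 ∈ M → p.2 ∈ M → q.1 ∈ M → q.2 ∈ M →
        (E p q ↔ pairProj I p = pairProj I q) := by
  classical
  obtain ⟨g, hg, col, hcol⟩ := ramseyAux 4
    (fun v : Fin 4 → ℕ => fun i j k l : Fin 4 =>
      if E (v i, v j) (v k, v l) then true else false)
  set Q : ℕ → ℕ → ℕ → ℕ → Prop := fun m n p q => E (g m, g n) (g p, g q) with hQdef
  have H : ∀ s : Fin 4 → ℕ, StrictMono s → ∀ i j k l : Fin 4,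
      (Q (s i) (s j) (s k) (s l) ↔ col i j k l = true) := by
    intro s hs i j k l
    have h0 := congrFun (congrFun (congrFun (congrFun (hcol s hs) i) j) k) l
    simp only at h0
    constructor
    · intro h; rw [if_pos h] at h0; exact h0.symm
    · intro h
      by_contra hE'
      rw [if_neg hE', h] at h0
      exact Bool.false_ne_true h0
  have qsymm : ∀ {m n p q : ℕ}, m < n → p < q → Q m n p q → Q p q m n :=
    fun h1 h2 => hsymm _ _ (hg h1) (hg h2)
  have qtrans : ∀ {m n p q r s : ℕ}, m < n → p < q → r < s →
      Q m n p q → Q p q r s → Q m n r s :=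
    fun h1 h2 h3 => htrans _ _ _ (hg h1) (hg h2) (hg h3)
  have qrefl : ∀ {m n : ℕ}, m < n → Q m n m n := fun h => hrefl _ (hg h)
  -- transfer lemmas
  have hLf : ∀ x y z : ℕ, x < y → y < z → (Q x y x z ↔ col 0 1 0 2 = true) := by
    intro x y z h1 h2
    have := H ![x, y, z, z+1] (sm4 h1 h2 (Nat.lt_succ_self z)) 0 1 0 2
    simpa using this
  have hRt : ∀ x y z : ℕ, x < y → y < z → (Q x z y z ↔ col 0 2 1 2 = true) := by
    intro x y z h1 h2
    have := H ![x, y, z, z+1] (sm4 h1 h2 (Nat.lt_succ_self z)) 0 2 1 2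
    simpa using this
  have hSh : ∀ x y z : ℕ, x < y → y < z → (Q x y y z ↔ col 0 1 1 2 = true) := by
    intro x y z h1 h2
    have := H ![x, y, z, z+1] (sm4 h1 h2 (Nat.lt_succ_self z)) 0 1 1 2
    simpa using this
  have hDj : ∀ w x y z : ℕ, w < x → x < y → y < z →
      (Q w x y z ↔ col 0 1 2 3 = true) := by
    intro w x y z h1 h2 h3
    have := H ![w, x, y, z] (sm4 h1 h2 h3) 0 1 2 3
    simpa using this
  have hNst : ∀ w x y z : ℕ, w < x → x < y → y < z →
      (Q w z x y ↔ col 0 3 1 2 = true) := by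
    intro w x y z h1 h2 h3
    have := H ![w, x, y, z] (sm4 h1 h2 h3) 0 3 1 2
    simpa using this
  have hCrs : ∀ w x y z : ℕ, w < x → x < y → y < z →
      (Q w y x z ↔ col 0 2 1 3 = true) := by
    intro w x y z h1 h2 h3
    have := H ![w, x, y, z] (sm4 h1 h2 h3) 0 2 1 3
    simpa using this
  -- reduction to index-level characterization
  refine ⟨Set.range g, Set.infinite_range_of_injective hg.injective, ?_⟩
  have key : ∀ (I : Set (Fin 2)),
      (∀ m n p q : ℕ, m < n → p < q →
        (Q m n p q ↔ pairProj I (g m, g n) = pairProj I (g p, g q))) →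
      ∀ p q : ℕ × ℕ, p.1 < p.2 → q.1 < q.2 →
        p.1 ∈ Set.range g → p.2 ∈ Set.range g →
        q.1 ∈ Set.range g → q.2 ∈ Set.range g →
        (E p q ↔ pairProj I p = pairProj I q) := by
    intro I hI p q hp hq hp1 hp2 hq1 hq2
    obtain ⟨m, hm⟩ := hp1
    obtain ⟨n, hn⟩ := hp2
    obtain ⟨p', hp'⟩ := hq1
    obtain ⟨q', hq'⟩ := hq2
    have hpe : p = (g m, g n) := by rw [hm, hn]
    have hqe : q = (g p', g q') := by rw [hp', hq']
    subst hpe hqe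
    exact hI m n p' q' (hg.lt_iff_lt.mp hp) (hg.lt_iff_lt.mp hq)
  by_cases hdj : col 0 1 2 3 = true
  · -- everything equivalent
    have hall : ∀ m n p q : ℕ, m < n → p < q → Q m n p q := by
      intro m n p q h1 h2
      have hr1 : n < max n q + 1 := by omega
      have hr2 : q < max n q + 1 := by omega
      have q1 : Q m n (max n q + 1) (max n q + 2) :=
        (hDj m n (max n q + 1) (max n q + 2) h1 hr1 (by omega)).mpr hdj
      have q2 : Q p q (max n q + 1) (max n q + 2) :=
        (hDj p q (max n q + 1) (max n q + 2) h2 hr2 (by omega)).mpr hdj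
      exact qtrans h1 (by omega) h2 q1 (qsymm h2 (by omega) q2)
    refine ⟨∅, key ∅ ?_⟩
    intro m n p q h1 h2
    rw [pairProj_empty, pairProj_empty]
    simp [hall m n p q h1 h2]
  · have hnsh : ¬ (col 0 1 1 2 = true) := by
      intro h
      have q1 : Q 0 1 1 2 := (hSh 0 1 2 (by omega) (by omega)).mpr h
      have q2 : Q 1 2 2 3 := (hSh 1 2 3 (by omega) (by omega)).mpr h
      exact hdj ((hDj 0 1 2 3 (by omega) (by omega) (by omega)).mp
        (qtrans (by omega) (by omega) (by omega) q1 q2))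
    have hncrs : ¬ (col 0 2 1 3 = true) := by
      intro h
      have q1 : Q 0 2 1 3 := (hCrs 0 1 2 3 (by omega) (by omega) (by omega)).mpr h
      have q2 : Q 1 3 2 4 := (hCrs 1 2 3 4 (by omega) (by omega) (by omega)).mpr h
      exact hnsh ((hSh 0 2 4 (by omega) (by omega)).mp
        (qtrans (by omega) (by omega) (by omega) q1 q2))
    have hnnst : ¬ (col 0 3 1 2 = true) := by
      intro h
      have q1 : Q 0 5 1 2 := (hNst 0 1 2 5 (by omega) (by omega) (by omega)).mpr h
      have q2 : Q 0 5 3 4 := (hNst 0 3 4 5 (by omega) (by omega) (by omega)).mpr h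
      exact hdj ((hDj 1 2 3 4 (by omega) (by omega) (by omega)).mp
        (qtrans (by omega) (by omega) (by omega) (qsymm (by omega) (by omega) q1) q2))
    by_cases hlf : col 0 1 0 2 = true
    · -- E iff same first coordinate
      have hchar : ∀ m n p q : ℕ, m < n → p < q → (Q m n p q ↔ m = p) := by
        intro m n p q h1 h2
        constructor
        · intro hQ
          by_contra hne
          have main : ∀ m n p q : ℕ, m < n → p < q → m < p → Q m n p q → False := by
            intro m n p q h1 h2 hmp hQ
            have hnz : n < max n q + 1 := by omega
            have hqz : q < max n q + 1 := by omega
            have hpz : p < max n q + 1 := by omega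
            have q1 : Q m n m (max n q + 1) := (hLf m n (max n q + 1) h1 hnz).mpr hlf
            have q2 : Q p q p (max n q + 2) := (hLf p q (max n q + 2) h2 (by omega)).mpr hlf
            have q3 : Q m (max n q + 1) p q :=
              qtrans (by omega) h1 h2 (qsymm h1 (by omega) q1) hQ
            have q4 : Q m (max n q + 1) p (max n q + 2) :=
              qtrans (by omega) h2 (by omega) q3 q2
            exact hncrs ((hCrs m p (max n q + 1) (max n q + 2) hmp hpz (by omega)).mp q4)
          rcases lt_trichotomy m p with h | h | h
          · exact main m n p q h1 h2 h hQ
          · exact hne h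
          · exact main p q m n h2 h1 h (qsymm h1 h2 hQ)
        · intro he
          subst he
          rcases lt_trichotomy n q with h | h | h
          · exact (hLf m n q h1 h).mpr hlf
          · subst h; exact qrefl h1
          · exact qsymm h2 h1 ((hLf m q n h2 h).mpr hlf)
      refine ⟨{0}, key {0} ?_⟩
      intro m n p q h1 h2
      rw [hchar m n p q h1 h2, pairProj_zero, pairProj_zero,
        Set.singleton_eq_singleton_iff]
      exact (hg.injective.eq_iff).symm
    · by_cases hrt : col 0 2 1 2 = true
      · -- E iff same second coordinate
        have hchar : ∀ m n p q : ℕ, m < n → p < q → (Q m n p q ↔ n = q) := by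
          intro m n p q h1 h2
          constructor
          · intro hQ
            by_contra hne
            have main : ∀ m n p q : ℕ, m < n → p < q → n < q → Q m n p q → False := by
              intro m n p q h1 h2 hnq hQ
              have q3 : Q m n n q := by
                rcases lt_trichotomy p n with h | h | h
                · exact qtrans h1 h2 hnq hQ ((hRt p n q h hnq).mpr hrt)
                · subst h; exact hQ
                · exact qtrans h1 h2 hnq hQ
                    (qsymm hnq h2 ((hRt n p q h h2).mpr hrt))
              exact hnsh ((hSh m n q h1 hnq).mp q3)
            rcases lt_trichotomy n q with h | h | h
            · exact main m n p q h1 h2 h hQ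
            · exact hne h
            · exact main p q m n h2 h1 h (qsymm h1 h2 hQ)
          · intro he
            subst he
            rcases lt_trichotomy m p with h | h | h
            · exact (hRt m p n h h2).mpr hrt
            · subst h; exact qrefl h1
            · exact qsymm h2 h1 ((hRt p m n h h1).mpr hrt)
        refine ⟨{1}, key {1} ?_⟩
        intro m n p q h1 h2
        rw [hchar m n p q h1 h2, pairProj_one, pairProj_one,
          Set.singleton_eq_singleton_iff]
        exact (hg.injective.eq_iff).symm
      · -- E iff equal
        have main2 : ∀ m n p q : ℕ, m < n → p < q → m < p → Q m n p q → False := by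
          intro m n p q h1 h2 hmp hQ
          rcases lt_trichotomy n p with h | h | h
          · exact hdj ((hDj m n p q h1 h h2).mp hQ)
          · subst h; exact hnsh ((hSh m n q h1 h2).mp hQ)
          · rcases lt_trichotomy n q with h' | h' | h'
            · exact hncrs ((hCrs m p n q hmp h h').mp hQ)
            · subst h'; exact hrt ((hRt m p n hmp h).mp hQ)
            · exact hnnst ((hNst m p q n hmp (by omega) h').mp hQ)
        have hchar : ∀ m n p q : ℕ, m < n → p < q → (Q m n p q ↔ m = p ∧ n = q) := by
          intro m n p q h1 h2
          constructor
          · intro hQ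
            rcases lt_trichotomy m p with h | h | h
            · exact absurd hQ (fun hQ => main2 m n p q h1 h2 h hQ)
            · subst h
              refine ⟨rfl, ?_⟩
              rcases lt_trichotomy n q with h' | h' | h'
              · exact absurd ((hLf m n q h1 h').mp hQ) hlf
              · exact h'
              · exact absurd ((hLf m q n h2 h').mp (qsymm h1 h2 hQ)) hlf
            · exact absurd (qsymm h1 h2 hQ) (fun hQ' => main2 p q m n h2 h1 h hQ')
          · rintro ⟨rfl, rfl⟩
            exact qrefl h1
        refine ⟨Set.univ, key Set.univ ?_⟩
        intro m n p q h1 h2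
        rw [hchar m n p q h1 h2, pairProj_univ, pairProj_univ,
          pair_eq_iff (hg h1) (hg h2), hg.injective.eq_iff, hg.injective.eq_iff]
end

section
/- Galvin's lemma instance derived from Nash-Williams: for every front F on an infinite set M ⊆ ω, there is an infinite N ⊆ M such that F|N = {a ∈ F : a ⊆ N} is a barrier on N, i.e., F|N is Sperner. -/
/-- `a` is an initial segment of the infinite set `X`. -/
def InitSegOfSet (a : Finset ℕ) (X : Set ℕ) : Prop :=
  (↑a : Set ℕ) = {n ∈ X | ∃ m ∈ a, n ≤ m}

/-- `s` is an initial segment of the finite set `t`. -/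
def InitSeg (s t : Finset ℕ) : Prop :=
  s = t.filter (fun n => ∃ m ∈ s, n ≤ m)

namespace GalvinNW

/-- `X` accepts `s` (relative to the family `G`). -/
def Acc (G : Set (Finset ℕ)) (X : Set ℕ) (s : Finset ℕ) : Prop :=
  ∀ Y ⊆ X, Y.Infinite → ∃ t : Finset ℕ,
    InitSegOfSet t {n ∈ Y | ∀ m ∈ s, m < n} ∧ s ∪ t ∈ G

/-- `X` rejects `s`. -/
def Rej (G : Set (Finset ℕ)) (X : Set ℕ) (s : Finset ℕ) : Prop :=
  ∀ Y ⊆ X, Y.Infinite → ¬ Acc G Y s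

lemma Acc.mono {G X Y s} (h : Acc G X s) (hYX : Y ⊆ X) : Acc G Y s :=
  fun Z hZ => h Z (hZ.trans hYX)

lemma Rej.mono {G X Y s} (h : Rej G X s) (hYX : Y ⊆ X) : Rej G Y s :=
  fun Z hZ => h Z (hZ.trans hYX)

lemma initSegOfSet_empty (Z : Set ℕ) : InitSegOfSet ∅ Z := by
  simp [InitSegOfSet]

lemma acc_of_mem {G : Set (Finset ℕ)} {s : Finset ℕ} (hs : s ∈ G) (X : Set ℕ) :
    Acc G X s := by
  intro Y _ _
  exact ⟨∅, initSegOfSet_empty _, by simpa using hs⟩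

lemma not_acc_and_rej {G X s} (hX : X.Infinite) (hr : Rej G X s) : ¬ Acc G X s :=
  hr X subset_rfl hX

lemma exists_decide (G : Set (Finset ℕ)) (X : Set ℕ) (hX : X.Infinite) (s : Finset ℕ) :
    ∃ Y, Y ⊆ X ∧ Y.Infinite ∧ (Acc G Y s ∨ Rej G Y s) := by
  by_cases h : ∃ Y, Y ⊆ X ∧ Y.Infinite ∧ Acc G Y s
  · obtain ⟨Y, h1, h2, h3⟩ := h
    exact ⟨Y, h1, h2, Or.inl h3⟩
  · push_neg at h
    exact ⟨X, subset_rfl, hX, Or.inr fun Y hY hYinf => h Y hY hYinf⟩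

lemma exists_decide_list (G : Set (Finset ℕ)) :
    ∀ (l : List (Finset ℕ)) (X : Set ℕ), X.Infinite →
      ∃ Y, Y ⊆ X ∧ Y.Infinite ∧ ∀ s ∈ l, Acc G Y s ∨ Rej G Y s := by
  intro l
  induction l with
  | nil => exact fun X hX => ⟨X, subset_rfl, hX, by simp⟩
  | cons a l ih =>
    intro X hX
    obtain ⟨Y, hY1, hY2, hY3⟩ := exists_decide G X hX a
    obtain ⟨Z, hZ1, hZ2, hZ3⟩ := ih Y hY2
    refine ⟨Z, hZ1.trans hY1, hZ2, ?_⟩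
    intro s hs
    rcases List.mem_cons.1 hs with rfl | hs
    · rcases hY3 with h | h
      · exact Or.inl (h.mono hZ1)
      · exact Or.inr (h.mono hZ1)
    · exact hZ3 s hs

lemma exists_step (G : Set (Finset ℕ)) (X : Set ℕ) (P : Finset ℕ) (hX : X.Infinite) :
    ∃ Y, Y ⊆ X ∧ Y.Infinite ∧ (∀ y ∈ Y, sInf X < y) ∧
      ∀ s ⊆ insert (sInf X) P, Acc G Y s ∨ Rej G Y s := by
  have h1 : (X \ {x | x ≤ sInf X}).Infinite := hX.diff (Set.finite_Iic (sInf X))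
  obtain ⟨Y, hY1, hY2, hY3⟩ :=
    exists_decide_list G ((insert (sInf X) P).powerset.toList) _ h1
  refine ⟨Y, hY1.trans Set.diff_subset, hY2, ?_, ?_⟩
  · intro y hy
    have := hY1 hy
    simp only [Set.mem_diff, Set.mem_setOf_eq, not_le] at this
    exact this.2
  · intro s hs
    exact hY3 s (by simpa [Finset.mem_powerset] using hs)

/-- Two initial segments of the same set are comparable. -/
lemma initSeg_total {a b : Finset ℕ} {Z : Set ℕ}
    (ha : InitSegOfSet a Z) (hb : InitSegOfSet b Z) : InitSeg a b ∨ InitSeg b a := by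
  have key : ∀ (s t : Finset ℕ) (hs : s.Nonempty) (ht : t.Nonempty),
      InitSegOfSet s Z → InitSegOfSet t Z → s.max' hs ≤ t.max' ht → InitSeg s t := by
    intro s t hs ht hsZ htZ hmax
    unfold InitSeg
    ext n
    simp only [Finset.mem_filter]
    constructor
    · intro hn
      have hnZ : n ∈ Z := by
        have : (n : ℕ) ∈ (↑s : Set ℕ) := hn
        rw [hsZ] at this
        exact this.1
      have hnt : n ∈ t := by
        have : (n : ℕ) ∈ {m ∈ Z | ∃ k ∈ t, m ≤ k} := by
          exact ⟨hnZ, t.max' ht, t.max'_mem ht, le_trans (s.le_max' n hn) hmax⟩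
        rw [← htZ] at this
        exact_mod_cast this
      exact ⟨hnt, n, hn, le_refl n⟩
    · rintro ⟨hnt, m, hm, hnm⟩
      have hnZ : n ∈ Z := by
        have : (n : ℕ) ∈ (↑t : Set ℕ) := hnt
        rw [htZ] at this
        exact this.1
      have : (n : ℕ) ∈ {k ∈ Z | ∃ m ∈ s, k ≤ m} := ⟨hnZ, m, hm, hnm⟩
      rw [← hsZ] at this
      exact_mod_cast this
  rcases a.eq_empty_or_nonempty with rfl | hA
  · left; simp [InitSeg]
  rcases b.eq_empty_or_nonempty with rfl | hB
  · right; simp [InitSeg]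
  rcases le_total (a.max' hA) (b.max' hB) with h | h
  · exact Or.inl (key a b hA hB ha hb h)
  · exact Or.inr (key b a hB hA hb ha h)


section Fusion

variable (G : Set (Finset ℕ)) (M0 : Set ℕ) (hM0 : M0.Infinite)

/-- One step of the fusion construction. -/
noncomputable def stepA : {p : Set ℕ × Finset ℕ // p.1.Infinite} →
    {p : Set ℕ × Finset ℕ // p.1.Infinite} :=
  fun a => ⟨((exists_step G a.1.1 a.1.2 a.2).choose, insert (sInf a.1.1) a.1.2),
    (exists_step G a.1.1 a.1.2 a.2).choose_spec.2.1⟩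

noncomputable def fseq : ℕ → {p : Set ℕ × Finset ℕ // p.1.Infinite} :=
  fun k => (stepA G)^[k] ⟨(M0, ∅), hM0⟩

noncomputable def Xk (k : ℕ) : Set ℕ := (fseq G M0 hM0 k).1.1

noncomputable def Pk (k : ℕ) : Finset ℕ := (fseq G M0 hM0 k).1.2

noncomputable def nk (k : ℕ) : ℕ := sInf (Xk G M0 hM0 k)

lemma Xk_inf (k : ℕ) : (Xk G M0 hM0 k).Infinite := (fseq G M0 hM0 k).2

lemma fseq_succ (k : ℕ) : fseq G M0 hM0 (k+1) = stepA G (fseq G M0 hM0 k) := by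
  unfold fseq
  exact Function.iterate_succ_apply' _ _ _

lemma Xk_succ_spec (k : ℕ) :
    Xk G M0 hM0 (k+1) ⊆ Xk G M0 hM0 k ∧
    (∀ y ∈ Xk G M0 hM0 (k+1), nk G M0 hM0 k < y) ∧
    ∀ s ⊆ insert (nk G M0 hM0 k) (Pk G M0 hM0 k),
      Acc G (Xk G M0 hM0 (k+1)) s ∨ Rej G (Xk G M0 hM0 (k+1)) s := by
  have h := (exists_step G (Xk G M0 hM0 k) (Pk G M0 hM0 k) (Xk_inf G M0 hM0 k)).choose_spec
  have e : Xk G M0 hM0 (k+1) =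
      (exists_step G (Xk G M0 hM0 k) (Pk G M0 hM0 k) (Xk_inf G M0 hM0 k)).choose := by
    show (fseq G M0 hM0 (k+1)).1.1 = _
    rw [fseq_succ]
    rfl
  rw [e]
  exact ⟨h.1, h.2.2.1, h.2.2.2⟩

lemma Pk_succ (k : ℕ) : Pk G M0 hM0 (k+1) = insert (nk G M0 hM0 k) (Pk G M0 hM0 k) := by
  show (fseq G M0 hM0 (k+1)).1.2 = _
  rw [fseq_succ]
  rfl

lemma Pk_zero : Pk G M0 hM0 0 = ∅ := rfl

lemma Xk_zero : Xk G M0 hM0 0 = M0 := rfl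

lemma nk_mem (k : ℕ) : nk G M0 hM0 k ∈ Xk G M0 hM0 k :=
  Nat.sInf_mem (Xk_inf G M0 hM0 k).nonempty

lemma Xk_mono : ∀ {j k : ℕ}, j ≤ k → Xk G M0 hM0 k ⊆ Xk G M0 hM0 j := by
  intro j k h
  induction k with
  | zero => simp_all
  | succ k ih =>
    rcases Nat.lt_or_ge j (k+1) with h' | h'
    · exact ((Xk_succ_spec G M0 hM0 k).1).trans (ih (Nat.lt_succ_iff.1 h'))
    · have : j = k + 1 := le_antisymm h h'
      subst this
      exact subset_rfl

lemma Xk_sub_M0 (k : ℕ) : Xk G M0 hM0 k ⊆ M0 := Xk_mono G M0 hM0 (Nat.zero_le k)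

lemma nk_lt_of_mem (k : ℕ) {y : ℕ} (hy : y ∈ Xk G M0 hM0 (k+1)) : nk G M0 hM0 k < y :=
  (Xk_succ_spec G M0 hM0 k).2.1 y hy

lemma nk_strictMono : StrictMono (nk G M0 hM0) := by
  apply strictMono_nat_of_lt_succ
  intro k
  exact nk_lt_of_mem G M0 hM0 k (nk_mem G M0 hM0 (k+1))

lemma nk_mem_Xk_of_le {k j : ℕ} (h : k ≤ j) : nk G M0 hM0 j ∈ Xk G M0 hM0 k :=
  Xk_mono G M0 hM0 h (nk_mem G M0 hM0 j)

lemma mem_Pk : ∀ (k : ℕ) (x : ℕ), x ∈ Pk G M0 hM0 k ↔ ∃ j < k, x = nk G M0 hM0 j := by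
  intro k
  induction k with
  | zero => simp [Pk_zero]
  | succ k ih =>
    intro x
    rw [Pk_succ, Finset.mem_insert]
    constructor
    · rintro (rfl | h)
      · exact ⟨k, Nat.lt_succ_self k, rfl⟩
      · obtain ⟨j, hj, hx⟩ := (ih x).1 h
        exact ⟨j, hj.trans (Nat.lt_succ_self k), hx⟩
    · rintro ⟨j, hj, rfl⟩
      rcases Nat.lt_or_ge j k with h' | h'
      · exact Or.inr ((ih _).2 ⟨j, h', rfl⟩)
      · have : j = k := Nat.lt_succ_iff.1 hj |>.antisymm h'
        subst this
        exact Or.inl rfl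

lemma Pk_mono : ∀ {j k : ℕ}, j ≤ k → Pk G M0 hM0 j ⊆ Pk G M0 hM0 k := by
  intro j k h x hx
  rw [mem_Pk] at hx ⊢
  obtain ⟨i, hi, rfl⟩ := hx
  exact ⟨i, lt_of_lt_of_le hi h, rfl⟩

lemma decide_Pk {k : ℕ} {s : Finset ℕ} (hs : s ⊆ Pk G M0 hM0 (k+1)) :
    Acc G (Xk G M0 hM0 (k+1)) s ∨ Rej G (Xk G M0 hM0 (k+1)) s := by
  apply (Xk_succ_spec G M0 hM0 k).2.2
  rwa [← Pk_succ]


lemma spread {s : Finset ℕ} {k : ℕ} (hrej : Rej G (Xk G M0 hM0 k) s)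
    {k₀ : ℕ} (hsub : s ⊆ Pk G M0 hM0 k₀) :
    ∃ K, ∀ j, K ≤ j → Rej G (Xk G M0 hM0 (j+1)) (insert (nk G M0 hM0 j) s) := by
  set k₂ := max k k₀ with hk₂
  set T : Set ℕ := {j | k₂ ≤ j ∧ Acc G (Xk G M0 hM0 (j+1)) (insert (nk G M0 hM0 j) s)}
    with hT
  have hsnk : ∀ x ∈ s, ∀ i, k₂ ≤ i → x < nk G M0 hM0 i := by
    intro x hx i hi
    obtain ⟨j', hj', rfl⟩ := (mem_Pk G M0 hM0 k₀ x).1 (hsub hx)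
    exact nk_strictMono G M0 hM0 (lt_of_lt_of_le hj' (le_trans (le_max_right k k₀) hi))
  by_cases hTfin : T.Finite
  · obtain ⟨b, hb⟩ := hTfin.bddAbove
    refine ⟨max (b+1) k₂, fun j hj => ?_⟩
    have hjk₂ : k₂ ≤ j := le_trans (le_max_right _ _) hj
    have hjT : j ∉ T := by
      intro hmem
      have := hb hmem
      omega
    have hdec : Acc G (Xk G M0 hM0 (j+1)) (insert (nk G M0 hM0 j) s) ∨
        Rej G (Xk G M0 hM0 (j+1)) (insert (nk G M0 hM0 j) s) := by
      apply decide_Pk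
      intro x hx
      rcases Finset.mem_insert.1 hx with rfl | hx
      · exact (mem_Pk G M0 hM0 (j+1) _).2 ⟨j, Nat.lt_succ_self j, rfl⟩
      · exact Pk_mono G M0 hM0 (by omega : k₀ ≤ j + 1) (hsub hx)
    rcases hdec with hacc | hr
    · exact absurd ⟨hjk₂, hacc⟩ hjT
    · exact hr
  · exfalso
    have hTinf : T.Infinite := hTfin
    set B : Set ℕ := nk G M0 hM0 '' T with hB
    have hBsub : B ⊆ Xk G M0 hM0 k := by
      rintro x ⟨j, hj, rfl⟩
      exact nk_mem_Xk_of_le G M0 hM0 (le_trans (le_max_left k k₀) hj.1)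
    have hBinf : B.Infinite :=
      hTinf.image ((nk_strictMono G M0 hM0).injective.injOn)
    apply hrej B hBsub hBinf
    -- show Acc G B s
    intro Y hYB hYinf
    set m := sInf Y with hmdef
    have hm : m ∈ Y := Nat.sInf_mem hYinf.nonempty
    obtain ⟨j, hjT, hmj⟩ := hYB hm
    have hYgt : ∀ y ∈ Y, ∀ x ∈ s, x < y := by
      intro y hy x hx
      obtain ⟨i, hi, rfl⟩ := hYB hy
      exact hsnk x hx i hi.1
    set Y' : Set ℕ := Y \ {m} with hY'def
    have hY'inf : Y'.Infinite := hYinf.diff (Set.finite_singleton m)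
    have hY'gt : ∀ y ∈ Y', m < y := by
      rintro y ⟨hy, hy2⟩
      have : m ≤ y := Nat.sInf_le hy
      simp only [Set.mem_singleton_iff] at hy2
      omega
    have hY'sub : Y' ⊆ Xk G M0 hM0 (j+1) := by
      intro y hy
      obtain ⟨i, hi, rfl⟩ := hYB hy.1
      have : nk G M0 hM0 j < nk G M0 hM0 i := hmj ▸ hY'gt _ hy
      have hji : j + 1 ≤ i := (nk_strictMono G M0 hM0).lt_iff_lt.1 this
      exact nk_mem_Xk_of_le G M0 hM0 hji
    have hacc := hjT.2
    rw [hmj] at hacc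
    obtain ⟨t, ht1, ht2⟩ := hacc Y' hY'sub hY'inf
    have hset1 : {n ∈ Y' | ∀ x ∈ insert m s, x < n} = Y' := by
      ext y
      refine ⟨fun h => h.1, fun hy => ⟨hy, ?_⟩⟩
      intro x hx
      rcases Finset.mem_insert.1 hx with rfl | hx
      · exact hY'gt y hy
      · exact hYgt y hy.1 x hx
    rw [hset1] at ht1
    have hset2 : {n ∈ Y | ∀ x ∈ s, x < n} = Y := by
      ext y
      exact ⟨fun h => h.1, fun hy => ⟨hy, fun x hx => hYgt y hy x hx⟩⟩
    refine ⟨insert m t, ?_, ?_⟩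
    · rw [hset2]
      unfold InitSegOfSet at ht1 ⊢
      ext y
      simp only [Finset.coe_insert, Set.mem_insert_iff, Set.mem_setOf_eq]
      constructor
      · rintro (rfl | hyt)
        · exact ⟨hm, m, Finset.mem_insert_self _ _, le_refl m⟩
        · have : (y : ℕ) ∈ {n ∈ Y' | ∃ x ∈ t, n ≤ x} := ht1 ▸ hyt
          exact ⟨this.1.1, by
            obtain ⟨x, hx, hyx⟩ := this.2
            exact ⟨x, Finset.mem_insert_of_mem hx, hyx⟩⟩
      · rintro ⟨hyY, x, hx, hyx⟩
        by_cases hym : y = m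
        · exact Or.inl hym
        · have hyY' : y ∈ Y' := ⟨hyY, by simpa using hym⟩
          rcases Finset.mem_insert.1 hx with rfl | hxt
          · exact absurd hyx (by have := hY'gt y hyY'; omega)
          · right
            have : (y : ℕ) ∈ {n ∈ Y' | ∃ x ∈ t, n ≤ x} := ⟨hyY', x, hxt, hyx⟩
            rw [← ht1] at this
            exact_mod_cast this
    · have : s ∪ insert m t = insert m s ∪ t := by
        ext x
        simp only [Finset.mem_union, Finset.mem_insert]
        tauto
      rw [this]
      exact ht2


lemma exists_step2 (Q : Finset ℕ)
    (hQ1 : ∀ s ⊆ Q, ∃ k, Rej G (Xk G M0 hM0 k) s)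
    (hQ2 : ∀ x ∈ Q, ∃ j, x = nk G M0 hM0 j) :
    ∃ m, (∀ x ∈ Q, x < m) ∧ (∃ j, m = nk G M0 hM0 j) ∧
      (∀ s ⊆ insert m Q, ∃ k, Rej G (Xk G M0 hM0 k) s) := by
  choose f hf using hQ2
  set b := Q.attach.sup (fun x => f x.1 x.2) + 1 with hbdef
  have hb : ∀ x (hx : x ∈ Q), f x hx < b := by
    intro x hx
    have := Finset.le_sup (f := fun x : {y // y ∈ Q} => f x.1 x.2)
      (Finset.mem_attach _ ⟨x, hx⟩)
    exact Nat.lt_succ_of_le this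
  have hsubP : ∀ s ⊆ Q, s ⊆ Pk G M0 hM0 b := by
    intro s hs x hx
    exact (mem_Pk G M0 hM0 b x).2 ⟨f x (hs hx), hb _ _, hf x (hs hx)⟩
  have hKex : ∀ s ∈ Q.powerset, ∃ K, ∀ j, K ≤ j →
      Rej G (Xk G M0 hM0 (j+1)) (insert (nk G M0 hM0 j) s) := by
    intro s hs
    obtain ⟨k, hk⟩ := hQ1 s (Finset.mem_powerset.1 hs)
    exact spread G M0 hM0 hk (hsubP s (Finset.mem_powerset.1 hs))
  choose K hK using hKex
  set J := max b (Q.powerset.attach.sup (fun s => K s.1 s.2)) with hJdef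
  refine ⟨nk G M0 hM0 J, ?_, ⟨J, rfl⟩, ?_⟩
  · intro x hx
    rw [hf x hx]
    exact nk_strictMono G M0 hM0 (lt_of_lt_of_le (hb x hx) (le_max_left _ _))
  · intro s hs
    by_cases hm : nk G M0 hM0 J ∈ s
    · have hs' : s.erase (nk G M0 hM0 J) ⊆ Q := Finset.subset_insert_iff.1 hs
      have hmemP : s.erase (nk G M0 hM0 J) ∈ Q.powerset := Finset.mem_powerset.2 hs'
      have hKle : K _ hmemP ≤ J := by
        have := Finset.le_sup (f := fun s : {t // t ∈ Q.powerset} => K s.1 s.2)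
          (Finset.mem_attach _ ⟨_, hmemP⟩)
        exact le_trans this (le_max_right _ _)
      have h2 := hK _ hmemP J hKle
      rw [Finset.insert_erase hm] at h2
      exact ⟨J+1, h2⟩
    · have hsQ : s ⊆ Q := by
        rwa [Finset.subset_insert_iff, Finset.erase_eq_of_notMem hm] at hs
      exact hQ1 s hsQ

include hM0 in
theorem dichotomy :
    ∃ N : Set ℕ, N ⊆ M0 ∧ N.Infinite ∧
      ((∀ s : Finset ℕ, ↑s ⊆ N → s ∉ G) ∨
       (∀ Y ⊆ N, Y.Infinite → ∃ t : Finset ℕ, t ∈ G ∧ InitSegOfSet t Y)) := by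
  have hdec := decide_Pk G M0 hM0 (k := 0) (s := ∅) (Finset.empty_subset _)
  rcases hdec with hacc | hrej
  · -- acceptance of ∅: every infinite subset has an initial segment in G
    refine ⟨Xk G M0 hM0 1, Xk_sub_M0 G M0 hM0 1, Xk_inf G M0 hM0 1, Or.inr ?_⟩
    intro Y hY hYinf
    obtain ⟨t, ht1, ht2⟩ := hacc Y hY hYinf
    have hset : {n ∈ Y | ∀ m ∈ (∅ : Finset ℕ), m < n} = Y := by
      ext y; simp
    rw [hset] at ht1
    exact ⟨t, by simpa using ht2, ht1⟩
  · -- rejection of ∅: build N avoiding G entirely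
    set α := {Q : Finset ℕ // (∀ s ⊆ Q, ∃ k, Rej G (Xk G M0 hM0 k) s) ∧
      ∀ x ∈ Q, ∃ j, x = nk G M0 hM0 j} with hα
    have hstep : ∀ Q : α, ∃ Q' : α, ∃ m, Q'.1 = insert m Q.1 ∧ ∀ x ∈ Q.1, x < m := by
      rintro ⟨Q, hQ1, hQ2⟩
      obtain ⟨m, hm1, hm2, hm3⟩ := exists_step2 G M0 hM0 Q hQ1 hQ2
      refine ⟨⟨insert m Q, hm3, ?_⟩, m, rfl, hm1⟩
      intro x hx
      rcases Finset.mem_insert.1 hx with rfl | hx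
      · exact hm2
      · exact hQ2 x hx
    have hbase : ((∀ s ⊆ (∅ : Finset ℕ), ∃ k, Rej G (Xk G M0 hM0 k) s) ∧
        ∀ x ∈ (∅ : Finset ℕ), ∃ j, x = nk G M0 hM0 j) := by
      constructor
      · intro s hs
        rw [Finset.subset_empty] at hs
        subst hs
        exact ⟨1, hrej⟩
      · simp
    set step2 : α → α := fun Q => (hstep Q).choose with hstep2
    set f2 : ℕ → α := fun i => step2^[i] ⟨∅, hbase⟩ with hf2
    have hf2succ : ∀ i, ∃ m, (f2 (i+1)).1 = insert m (f2 i).1 ∧ ∀ x ∈ (f2 i).1, x < m := by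
      intro i
      have : f2 (i+1) = step2 (f2 i) := Function.iterate_succ_apply' _ _ _
      rw [this]
      exact (hstep (f2 i)).choose_spec
    have hf2mono : ∀ {i j : ℕ}, i ≤ j → (f2 i).1 ⊆ (f2 j).1 := by
      intro i j h
      induction j with
      | zero => simp_all
      | succ j ih =>
        rcases Nat.lt_or_ge i (j+1) with h' | h'
        · obtain ⟨m, hm1, _⟩ := hf2succ j
          rw [hm1]
          exact (ih (Nat.lt_succ_iff.1 h')).trans (Finset.subset_insert _ _)
        · have : i = j + 1 := le_antisymm h h'
          subst this
          exact subset_rfl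
    have hcard : ∀ i, i ≤ ((f2 i).1).card := by
      intro i
      induction i with
      | zero => simp
      | succ i ih =>
        obtain ⟨m, hm1, hm2⟩ := hf2succ i
        have hmnot : m ∉ (f2 i).1 := fun h => lt_irrefl m (hm2 m h)
        rw [hm1, Finset.card_insert_of_notMem hmnot]
        omega
    set N : Set ℕ := {x | ∃ i, x ∈ (f2 i).1} with hN
    have hNM : N ⊆ M0 := by
      rintro x ⟨i, hx⟩
      obtain ⟨j, rfl⟩ := (f2 i).2.2 x hx
      exact Xk_sub_M0 G M0 hM0 j (nk_mem G M0 hM0 j)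
    have hNinf : N.Infinite := by
      intro hfin
      have hsub : ∀ i, (f2 i).1 ⊆ hfin.toFinset := by
        intro i x hx
        exact hfin.mem_toFinset.2 ⟨i, hx⟩
      have h1 := Finset.card_le_card (hsub (hfin.toFinset.card + 1))
      have h2 := hcard (hfin.toFinset.card + 1)
      omega
    refine ⟨N, hNM, hNinf, Or.inl ?_⟩
    intro s hsN hsG
    have hmem : ∀ x ∈ s, ∃ i, x ∈ (f2 i).1 := fun x hx => hsN hx
    choose g hg using hmem
    set I := s.attach.sup (fun x => g x.1 x.2) with hI
    have hssub : s ⊆ (f2 I).1 := by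
      intro x hx
      exact hf2mono (Finset.le_sup (Finset.mem_attach _ ⟨x, hx⟩)) (hg x hx)
    obtain ⟨k, hk⟩ := (f2 I).2.1 s hssub
    exact not_acc_and_rej (Xk_inf G M0 hM0 k) hk (acc_of_mem hsG _)

end Fusion

end GalvinNW

/-- Galvin's lemma: every front on an infinite set M restricts to a barrier
on some infinite N ⊆ M. -/
theorem stmt_15 (M : Set ℕ) (hM : M.Infinite) (F : Set (Finset ℕ))
    (hF : ∀ a ∈ F, ↑a ⊆ M)
    (hfront : ∀ X : Set ℕ, X ⊆ M → X.Infinite → ∃ a ∈ F, InitSegOfSet a X)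
    (hNW : ∀ a ∈ F, ∀ b ∈ F, InitSeg a b → a = b) :
    ∃ N : Set ℕ, N ⊆ M ∧ N.Infinite ∧
      ∀ a ∈ F, ∀ b ∈ F, ↑a ⊆ N → ↑b ⊆ N → ¬ a ⊂ b := by
  classical
  set 𝒢 : Set (Finset ℕ) := {c | c ∈ F ∧ ∃ b ∈ F, b ⊂ c} with h𝒢
  obtain ⟨N, hNM, hNinf, hcase⟩ := GalvinNW.dichotomy 𝒢 M hM
  rcases hcase with h1 | h2
  · refine ⟨N, hNM, hNinf, ?_⟩
    intro a ha b hb haN hbN hab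
    exact h1 b hbN ⟨hb, a, ha, hab⟩
  · exfalso
    set S : Set ℕ := {k | ∃ a, a ∈ F ∧ ↑a ⊆ N ∧ a.card = k} with hS
    have hSne : S.Nonempty := by
      obtain ⟨a, haF, haseg⟩ := hfront N hNM hNinf
      have haN : ↑a ⊆ N := by
        intro x hx
        rw [InitSegOfSet] at haseg
        rw [haseg] at hx
        exact hx.1
      exact ⟨a.card, a, haF, haN, rfl⟩
    obtain ⟨a, haF, haN, hacard⟩ := Nat.sInf_mem hSne
    set Y : Set ℕ := ↑a ∪ {x ∈ N | ∀ m ∈ a, m < x} with hY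
    have hYN : Y ⊆ N := by
      rintro x (hx | hx)
      · exact haN hx
      · exact hx.1
    have hYinf : Y.Infinite := by
      have hsub : N \ Set.Iic (a.sup id) ⊆ Y := by
        rintro x ⟨hxN, hxB⟩
        simp only [Set.mem_Iic, not_le] at hxB
        refine Set.mem_union_right _ ⟨hxN, fun m hm => ?_⟩
        exact lt_of_le_of_lt (Finset.le_sup (f := id) hm) hxB
      exact (hNinf.diff (Set.finite_Iic _)).mono hsub
    have haY : InitSegOfSet a Y := by
      rw [InitSegOfSet]
      ext x
      simp only [Set.mem_setOf_eq, Finset.mem_coe]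
      constructor
      · intro hx
        exact ⟨Set.mem_union_left _ hx, x, hx, le_refl x⟩
      · rintro ⟨hxY, m, hm, hxm⟩
        rcases hxY with hx | hx
        · exact hx
        · exact absurd hxm (by have := hx.2 m hm; omega)
    obtain ⟨t, ht𝒢, htY⟩ := h2 Y hYN hYinf
    have htF : t ∈ F := ht𝒢.1
    have hat : a = t := by
      rcases GalvinNW.initSeg_total htY haY with h | h
      · exact (hNW t htF a haF h).symm
      · exact hNW a haF t htF h
    obtain ⟨b, hbF, hba⟩ := ht𝒢.2
    rw [← hat] at hba
    have hbN : ↑b ⊆ N := (Finset.coe_subset.2 hba.subset).trans haN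
    have hmem : b.card ∈ S := ⟨b, hbF, hbN, rfl⟩
    have hle := Nat.sInf_le hmem
    have hlt := Finset.card_lt_card hba
    omega
end

section
/- If U is a Ramsey ultrafilter on ω and F ⊆ [ω]^{<ω} is Nash-Williams, then the family of sets F|X = {a ∈ F : a ⊆ X} for X ∈ U generates an ultrafilter on base set F: for every partition F = F₀ ∪ F₁, there is an X ∈ U and an i ∈ {0,1} with F|X ⊆ F_i, provided F|X is nonempty cofinally. -/
lemma initSeg_iff {s t : Finset ℕ} :
    InitSeg s t ↔ s ⊆ t ∧ ∀ n ∈ t, n ∉ s → ∀ m ∈ s, m < n := by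
  constructor
  · intro h
    constructor
    · intro n hn; rw [h] at hn; exact (Finset.mem_filter.1 hn).1
    · intro n hnt hns m hm
      by_contra hlt
      push_neg at hlt
      exact hns (h ▸ Finset.mem_filter.2 ⟨hnt, ⟨m, hm, hlt⟩⟩)
  · rintro ⟨hsub, hlt⟩
    ext n
    simp only [Finset.mem_filter]
    constructor
    · intro hn; exact ⟨hsub hn, n, hn, le_refl n⟩
    · rintro ⟨hnt, m, hm, hle⟩
      by_contra hns
      exact absurd hle (not_le.2 (hlt n hnt hns m hm))

lemma initSeg_empty (t : Finset ℕ) : InitSeg ∅ t := by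
  simp [initSeg_iff]

lemma initSeg_trans {u t s : Finset ℕ} (h1 : InitSeg u t) (h2 : InitSeg t s) :
    InitSeg u s := by
  rw [initSeg_iff] at *
  obtain ⟨h1s, h1l⟩ := h1; obtain ⟨h2s, h2l⟩ := h2
  refine ⟨h1s.trans h2s, ?_⟩
  intro n hns hnu m hmu
  by_cases hnt : n ∈ t
  · exact h1l n hnt hnu m hmu
  · exact h2l n hns hnt m (h1s hmu)

lemma initSeg_erase_max {s : Finset ℕ} (hs : s.Nonempty) :
    InitSeg (s.erase (s.max' hs)) s := by
  rw [initSeg_iff]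
  refine ⟨Finset.erase_subset _ _, ?_⟩
  intro n hns hne m hm
  have h1 : n = s.max' hs := by
    by_contra h
    exact hne (Finset.mem_erase.2 ⟨h, hns⟩)
  have h2 := Finset.mem_erase.1 hm
  have := s.le_max' m h2.2
  omega

lemma diag (U : Ultrafilter ℕ)
    (hnp : ∀ A : Set ℕ, A.Finite → Aᶜ ∈ U)
    (hR : ∀ c : Finset ℕ → Fin 2, ∃ X ∈ U, ∀ s t : Finset ℕ,
      s.card = 2 → ↑s ⊆ X → t.card = 2 → ↑t ⊆ X → c s = c t)
    (B : ℕ → Set ℕ) (hB : ∀ n, B n ∈ U) :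
    ∃ X ∈ U, ∀ m ∈ X, ∀ n ∈ X, m < n → n ∈ B m := by
  classical
  set c : Finset ℕ → Fin 2 := fun s =>
    if (∀ a ∈ s, ∀ b ∈ s, a < b → b ∈ B a) then 0 else 1 with hc
  obtain ⟨X, hXU, hX⟩ := hR c
  obtain ⟨m, hm⟩ := Filter.nonempty_of_mem hXU
  have h2 : X ∩ B m ∩ (Set.Iic m)ᶜ ∈ U :=
    Filter.inter_mem (Filter.inter_mem hXU (hB m)) (hnp _ (Set.finite_Iic m))
  obtain ⟨n, ⟨⟨hnX, hnB⟩, hmn'⟩⟩ := Filter.nonempty_of_mem h2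
  have hmn : m < n := by simpa [Set.mem_compl_iff] using hmn'
  have hcard : ∀ a b : ℕ, a < b → ({a, b} : Finset ℕ).card = 2 := by
    intro a b hab
    rw [Finset.card_insert_of_notMem (by simp; omega), Finset.card_singleton]
  have hcoe : ∀ a b : ℕ, a ∈ X → b ∈ X → ↑({a, b} : Finset ℕ) ⊆ X := by
    intro a b ha hb
    intro x hx
    simp only [Finset.coe_insert, Finset.coe_singleton, Set.mem_insert_iff,
      Set.mem_singleton_iff] at hx
    rcases hx with rfl | rfl <;> assumption
  have hc0 : c {m, n} = 0 := by
    rw [hc]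
    simp only []
    rw [if_pos]
    intro a ha b hb hab
    simp only [Finset.mem_insert, Finset.mem_singleton] at ha hb
    rcases ha with rfl | rfl <;> rcases hb with rfl | rfl <;> first | omega | exact hnB
  refine ⟨X, hXU, ?_⟩
  intro a ha b hb hab
  have hcon := hX {a, b} {m, n} (hcard a b hab) (hcoe a b ha hb) (hcard m n hmn)
    (hcoe m n hm hnX)
  rw [hc0] at hcon
  by_contra hnb
  have : c {a, b} = 1 := by
    rw [hc]
    simp only []
    rw [if_neg]
    intro h
    exact hnb (h a (by simp) b (by simp) hab)
  rw [this] at hcon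
  exact absurd hcon (by decide)

lemma sel (U : Ultrafilter ℕ)
    (hnp : ∀ A : Set ℕ, A.Finite → Aᶜ ∈ U)
    (hR : ∀ c : Finset ℕ → Fin 2, ∃ X ∈ U, ∀ s t : Finset ℕ,
      s.card = 2 → ↑s ⊆ X → t.card = 2 → ↑t ⊆ X → c s = c t)
    (A : Finset ℕ → Set ℕ) (hA : ∀ s, A s ∈ U) :
    ∃ X ∈ U, ∀ s : Finset ℕ, ↑s ⊆ X → ∀ n ∈ X, (∀ m ∈ s, m < n) → n ∈ A s := by
  classical
  set B : ℕ → Set ℕ := fun m => ⋂ t ∈ (Finset.range (m+1)).powerset, A t with hBdef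
  have hB : ∀ m, B m ∈ U := fun m =>
    (Filter.biInter_finset_mem _).2 fun t _ => hA t
  obtain ⟨X, hXU, hX⟩ := diag U hnp hR B hB
  refine ⟨X ∩ A ∅, Filter.inter_mem hXU (hA ∅), ?_⟩
  intro s hs n hn hlt
  rcases s.eq_empty_or_nonempty with rfl | hne
  · exact hn.2
  · have hmX : s.max' hne ∈ X := (hs (by exact_mod_cast s.max'_mem hne)).1
    have hmn : s.max' hne < n := hlt _ (s.max'_mem hne)
    have hnB := hX _ hmX n hn.1 hmn
    rw [hBdef] at hnB
    have hsub : s ∈ (Finset.range (s.max' hne + 1)).powerset := by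
      rw [Finset.mem_powerset]
      intro x hx
      exact Finset.mem_range.2 (Nat.lt_succ_of_le (s.le_max' x hx))
    exact Set.mem_iInter₂.1 hnB s hsub

/-- Rejection predicate. -/
def Rej (U : Ultrafilter ℕ) (G : Set (Finset ℕ)) (s : Finset ℕ) : Prop :=
  ∃ A ∈ U, ∀ b ∈ G, InitSeg s b → ↑(b \ s) ⊆ A → False

/-- For a Ramsey ultrafilter U and a Nash-Williams family F, the sets F|X
for X ∈ U generate an ultrafilter on base set F. -/
theorem stmt_17 (U : Ultrafilter ℕ)
    (hRamsey : ∀ k l : ℕ, ∀ c : Finset ℕ → Fin l, ∃ X ∈ U,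
      ∀ s t : Finset ℕ, s.card = k → ↑s ⊆ X → t.card = k → ↑t ⊆ X → c s = c t)
    (F : Set (Finset ℕ))
    (hNW : ∀ a ∈ F, ∀ b ∈ F, InitSeg a b → a = b) :
    ∀ F' ⊆ F, ∃ X : Set ℕ, X ∈ U ∧
      ({a ∈ F | ↑a ⊆ X} ⊆ F' ∨ {a ∈ F | ↑a ⊆ X} ∩ F' = ∅) := by
  classical
  intro F' hF'
  -- Case: ∅ ∈ F. Then F = {∅} by Nash-Williams, so either branch is trivial.
  by_cases hemptyF : ∅ ∈ F
  · have hFeq : ∀ b ∈ F, b = ∅ := fun b hb => (hNW ∅ hemptyF b hb (initSeg_empty b)).symm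
    by_cases h0 : ∅ ∈ F'
    · exact ⟨Set.univ, Filter.univ_mem, Or.inl (fun x hx => (hFeq x hx.1) ▸ h0)⟩
    · refine ⟨Set.univ, Filter.univ_mem, Or.inr ?_⟩
      ext x
      simp only [Set.mem_inter_iff, Set.mem_setOf_eq, Set.mem_empty_iff_false, iff_false]
      rintro ⟨⟨hxF, -⟩, hxF'⟩
      exact h0 ((hFeq x hxF) ▸ hxF')
  -- Case: U principal.
  by_cases hfin : ∃ A : Set ℕ, A.Finite ∧ A ∈ U
  · obtain ⟨A, hAfin, hAU⟩ := hfin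
    obtain ⟨a, -, rfl⟩ := Ultrafilter.eq_pure_of_finite_mem hAfin hAU
    refine ⟨{a}, by simp, ?_⟩
    have hsub : ∀ x : Finset ℕ, x ∈ F → ↑x ⊆ ({a} : Set ℕ) → x = {a} := by
      intro x hxF hx
      have : x ⊆ ({a} : Finset ℕ) := by
        intro y hy
        have := hx (by exact_mod_cast hy)
        simpa using this
      rcases Finset.subset_singleton_iff.1 this with rfl | rfl
      · exact absurd hxF hemptyF
      · rfl
    by_cases hA' : ({a} : Finset ℕ) ∈ F'
    · refine Or.inl ?_
      rintro x ⟨hxF, hx⟩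
      exact (hsub x hxF hx) ▸ hA'
    · refine Or.inr ?_
      ext x
      simp only [Set.mem_inter_iff, Set.mem_setOf_eq, Set.mem_empty_iff_false, iff_false]
      rintro ⟨⟨hxF, hx⟩, hxF'⟩
      exact hA' ((hsub x hxF hx) ▸ hxF')
  -- Nonprincipal case.
  push_neg at hfin
  have hnp : ∀ A : Set ℕ, A.Finite → Aᶜ ∈ U := fun A hA =>
    Ultrafilter.compl_mem_iff_notMem.2 (hfin A hA)
  have hR : ∀ c : Finset ℕ → Fin 2, ∃ X ∈ U, ∀ s t : Finset ℕ,
      s.card = 2 → ↑s ⊆ X → t.card = 2 → ↑t ⊆ X → c s = c t := fun c => hRamsey 2 2 c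
  -- Case: ∅ rejected.
  by_cases h0 : Rej U F' ∅
  · obtain ⟨A, hAU, hA⟩ := h0
    refine ⟨A, hAU, Or.inr ?_⟩
    ext x
    simp only [Set.mem_inter_iff, Set.mem_setOf_eq, Set.mem_empty_iff_false, iff_false]
    rintro ⟨⟨-, hxA⟩, hxF'⟩
    exact hA x hxF' (initSeg_empty x) (by simpa using hxA)
  -- Members of F \ F' are rejected.
  have hFG : ∀ s ∈ F, s ∉ F' → Rej U F' s := by
    intro s hsF hsG
    exact ⟨Set.univ, Filter.univ_mem,
      fun b hb hseg _ => hsG ((hNW s hsF b (hF' hb) hseg) ▸ hb)⟩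
  -- Claim 1: accepted non-members of F have many accepted one-point extensions.
  have claim1 : ∀ s : Finset ℕ, ¬ Rej U F' s → s ∉ F →
      {n | (∀ m ∈ s, m < n) ∧ ¬ Rej U F' (insert n s)} ∈ U := by
    intro s hAcc hsF
    by_contra hC
    have hCU : {n | (∀ m ∈ s, m < n) ∧ ¬ Rej U F' (insert n s)}ᶜ ∈ U :=
      Ultrafilter.compl_mem_iff_notMem.2 hC
    have hwit : ∀ n : ℕ, ∃ A, A ∈ U ∧ (Rej U F' (insert n s) →
        ∀ b ∈ F', InitSeg (insert n s) b → ↑(b \ insert n s) ⊆ A → False) := by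
      intro n
      by_cases h : Rej U F' (insert n s)
      · obtain ⟨A, hAU, hA⟩ := h
        exact ⟨A, hAU, fun _ => hA⟩
      · exact ⟨Set.univ, Filter.univ_mem, fun h' => absurd h' h⟩
    choose A' hA'U hA' using hwit
    obtain ⟨X, hXU, hX⟩ := diag U hnp hR A' hA'U
    have hbig : {n | ∀ m ∈ s, m < n} ∈ U := by
      have : {n | ∀ m ∈ s, m < n} = ⋂ m ∈ s, Set.Ioi m := by
        ext n; simp [Set.mem_iInter]
      rw [this]
      exact (Filter.biInter_finset_mem _).2 fun m _ => by
        have := hnp (Set.Iic m) (Set.finite_Iic m)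
        simpa using this
    set D : Set ℕ := X ∩ {n | (∀ m ∈ s, m < n) ∧ ¬ Rej U F' (insert n s)}ᶜ ∩
        {n | ∀ m ∈ s, m < n} with hDdef
    have hDU : D ∈ U := Filter.inter_mem (Filter.inter_mem hXU hCU) hbig
    apply hAcc
    refine ⟨D, hDU, ?_⟩
    intro b hb hseg hbs
    by_cases hbe : b = s
    · exact hsF (hbe ▸ hF' hb)
    have hsb : s ⊆ b := (initSeg_iff.1 hseg).1
    have hne : (b \ s).Nonempty := by
      rw [Finset.sdiff_nonempty]
      intro h
      exact hbe (Finset.Subset.antisymm h hsb)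
    set n := (b \ s).min' hne with hndef
    have hnbs : n ∈ b \ s := Finset.min'_mem _ _
    have hnD : n ∈ D := hbs (by exact_mod_cast hnbs)
    have hnlt : ∀ m ∈ s, m < n := hnD.2
    have hRej : Rej U F' (insert n s) := by
      by_contra h
      exact hnD.1.2 ⟨hnlt, h⟩
    -- InitSeg (insert n s) b
    have hseg2 : InitSeg (insert n s) b := by
      rw [initSeg_iff]
      constructor
      · intro x hx
        rcases Finset.mem_insert.1 hx with rfl | hx
        · exact (Finset.mem_sdiff.1 hnbs).1
        · exact hsb hx
      · intro k hkb hki m hm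
        have hks : k ∉ s := fun h => hki (Finset.mem_insert_of_mem h)
        have hkn : k ≠ n := fun h => hki (h ▸ Finset.mem_insert_self n s)
        have hkbs : k ∈ b \ s := Finset.mem_sdiff.2 ⟨hkb, hks⟩
        have hnk : n < k := lt_of_le_of_ne (Finset.min'_le _ k hkbs) (Ne.symm hkn)
        rcases Finset.mem_insert.1 hm with rfl | hm
        · exact hnk
        · exact (initSeg_iff.1 hseg).2 k hkb hks m hm
    have hsub2 : ↑(b \ insert n s) ⊆ A' n := by
      intro k hk
      have hk' : k ∈ b \ insert n s := by exact_mod_cast hk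
      rcases Finset.mem_sdiff.1 hk' with ⟨hkb, hki⟩
      have hks : k ∉ s := fun h => hki (Finset.mem_insert_of_mem h)
      have hkn : k ≠ n := fun h => hki (h ▸ Finset.mem_insert_self n s)
      have hkbs : k ∈ b \ s := Finset.mem_sdiff.2 ⟨hkb, hks⟩
      have hkD : k ∈ D := hbs (by exact_mod_cast hkbs)
      have hnk : n < k := lt_of_le_of_ne (Finset.min'_le _ k hkbs) (Ne.symm hkn)
      exact hX n hnD.1.1 k hkD.1.1 hnk
    exact hA' n hRej b hb hseg2 hsub2
  -- Fusion.
  set Ax : Finset ℕ → Set ℕ := fun s =>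
    if (¬ Rej U F' s ∧ s ∉ F) then {n | (∀ m ∈ s, m < n) ∧ ¬ Rej U F' (insert n s)}
    else Set.univ with hAxdef
  have hAx : ∀ s, Ax s ∈ U := by
    intro s
    rw [hAxdef]
    by_cases h : ¬ Rej U F' s ∧ s ∉ F
    · simp only [if_pos h]
      exact claim1 s h.1 h.2
    · simp only [if_neg h]
      exact Filter.univ_mem
  obtain ⟨X, hXU, hX⟩ := sel U hnp hR Ax hAx
  refine ⟨X, hXU, Or.inl ?_⟩
  have key : ∀ k, ∀ s : Finset ℕ, s.card = k → ↑s ⊆ X →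
      (∀ t, InitSeg t s → t ≠ s → t ∉ F) → ¬ Rej U F' s := by
    intro k
    induction k with
    | zero =>
      intro s hcard _ _
      rw [Finset.card_eq_zero] at hcard
      subst hcard
      exact h0
    | succ k ih =>
      intro s hcard hsX hseg
      have hne : s.Nonempty := Finset.card_pos.1 (by omega)
      set n := s.max' hne with hndef
      set t := s.erase n with htdef
      have hts : InitSeg t s := initSeg_erase_max hne
      have htne : t ≠ s := by
        rw [htdef]
        rw [Ne, Finset.erase_eq_self]
        exact fun h => h (s.max'_mem hne)
      have htF : t ∉ F := hseg t hts htne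
      have htX : ↑t ⊆ X := fun x hx => hsX (by
        have : x ∈ t := by exact_mod_cast hx
        exact_mod_cast Finset.mem_of_mem_erase this)
      have hninT : n ∉ t := Finset.notMem_erase n s
      have hAcct : ¬ Rej U F' t := by
        apply ih t (by rw [htdef, Finset.card_erase_of_mem (s.max'_mem hne), hcard]; rfl) htX
        intro u hu hune
        apply hseg u (initSeg_trans hu hts)
        intro h
        rw [h] at hu
        exact hninT ((initSeg_iff.1 hu).1 (Finset.max'_mem s hne))
      have hnAx : n ∈ Ax t := by
        apply hX t htX n (hsX (by exact_mod_cast Finset.max'_mem s hne))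
        intro m hm
        have hms : m ∈ s := Finset.mem_of_mem_erase hm
        have hle := s.le_max' m hms
        have hmn : m ≠ n := (Finset.mem_erase.1 hm).1
        omega
      have hcond : ¬ Rej U F' t ∧ t ∉ F := ⟨hAcct, htF⟩
      have hnAx2 : n ∈ (if ¬ Rej U F' t ∧ t ∉ F then
          {k | (∀ m ∈ t, m < k) ∧ ¬ Rej U F' (insert k t)} else Set.univ) := hnAx
      rw [if_pos hcond] at hnAx2
      have hins : insert n t = s := Finset.insert_erase (Finset.max'_mem s hne)
      exact hins ▸ hnAx2.2
  rintro a ⟨haF, haX⟩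
  have hAcc : ¬ Rej U F' a :=
    key a.card a rfl haX (fun t ht htne htF => htne (hNW t htF a haF ht))
  by_contra haG
  exact hAcc (hFG a haF haG)
end

section
/- Weakly Ramsey ultrafilters from the Ramsey partition relation: if U is an ultrafilter on ω such that for every coloring c : [ω]² → 3 there is X ∈ U with c taking at most 2 values on [X]², then for every l ≥ 2 and every coloring c : [ω]² → l there is X ∈ U with c taking at most 2 values on [X]². -/
/-- Weak Ramseyness for 3 colors implies weak Ramseyness for every finite
number of colors. -/
theorem stmt_19 (U : Ultrafilter ℕ) (hU : ∀ a : ℕ, U ≠ pure a)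
    (h3 : ∀ c : Finset ℕ → Fin 3, ∃ X ∈ U, ∃ v w : Fin 3,
      ∀ s : Finset ℕ, s.card = 2 → ↑s ⊆ X → c s = v ∨ c s = w) :
    ∀ l : ℕ, 2 ≤ l → ∀ c : Finset ℕ → Fin l, ∃ X ∈ U, ∃ v w : Fin l,
      ∀ s : Finset ℕ, s.card = 2 → ↑s ⊆ X → c s = v ∨ c s = w := by
  -- Key lemma: if c takes at most 3 values on [X]², we can find X' ∈ U where
  -- c takes at most 2 values.
  have key : ∀ (m : ℕ) (c : Finset ℕ → Fin m) (X : Set ℕ), X ∈ U →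
      ∀ t0 t1 t2 : Fin m,
      (∀ s : Finset ℕ, s.card = 2 → ↑s ⊆ X → c s = t0 ∨ c s = t1 ∨ c s = t2) →
      ∃ X' ∈ U, ∃ v w : Fin m, ∀ s : Finset ℕ, s.card = 2 → ↑s ⊆ X' →
        c s = v ∨ c s = w := by
    intro m c X hX t0 t1 t2 ht
    set d : Finset ℕ → Fin 3 :=
      fun s => if c s = t0 then 0 else if c s = t1 then 1 else 2 with hd
    obtain ⟨Y, hY, a, b, hab⟩ := h3 d
    refine ⟨X ∩ Y, U.toFilter.inter_mem hX hY, ![t0, t1, t2] a, ![t0, t1, t2] b, ?_⟩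
    intro s hs hsub
    have h1 := ht s hs (hsub.trans Set.inter_subset_left)
    have h2 := hab s hs (hsub.trans Set.inter_subset_right)
    have hc : c s = ![t0, t1, t2] (d s) := by
      simp only [hd]
      split_ifs with h h'
      · simpa using h
      · simpa using h'
      · rcases h1 with h1 | h1 | h1 <;> simp [h1] at h h' ⊢
    rcases h2 with h2 | h2 <;> rw [h2] at hc
    · exact Or.inl hc
    · exact Or.inr hc
  intro l
  induction l with
  | zero => omega
  | succ n ih =>
    intro _ c
    by_cases hsmall : n + 1 ≤ 3
    · -- at most 3 colors: use `key` directly with X = univ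
      refine key (n + 1) c Set.univ Filter.univ_mem
        ⟨min 0 n, by omega⟩ ⟨min 1 n, by omega⟩ ⟨min 2 n, by omega⟩ ?_ |>.imp
        fun X' hX' => hX'
      intro s _ _
      have hb : (c s).val < n + 1 := (c s).isLt
      rcases (by omega : (c s).val = 0 ∨ (c s).val = 1 ∨ (c s).val = 2) with h | h | h
      · left; exact Fin.ext (by simp only [Fin.val_mk]; omega)
      · right; left; exact Fin.ext (by simp only [Fin.val_mk]; omega)
      · right; right; exact Fin.ext (by simp only [Fin.val_mk]; omega)
    · -- at least 4 colors: merge the top two colors and use the IH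
      have hn : 3 ≤ n := by omega
      set merge : Fin (n + 1) → Fin n := fun i => ⟨min i.val (n - 1), by omega⟩
        with hmerge
      obtain ⟨X, hX, v, w, hvw⟩ := ih (by omega) (fun s => merge (c s))
      refine key (n + 1) c X hX v.castSucc w.castSucc (Fin.last n) ?_
      intro s hs hsub
      have h := hvw s hs hsub
      have hb : (c s).val < n + 1 := (c s).isLt
      by_cases hlast : (c s).val = n
      · right; right; exact Fin.ext (by simpa using hlast)
      · have hle : (c s).val ≤ n - 1 := by omega
        have hm : (merge (c s)).val = (c s).val := by
          simp [hmerge]; omega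
        rcases h with h | h
        · left; exact Fin.ext (by rw [Fin.coe_castSucc, ← h, hm])
        · right; left; exact Fin.ext (by rw [Fin.coe_castSucc, ← h, hm])
end
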